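/- arXiv:1810.06349 — 10 statements merged into one kernel-verified Lean document; each statement's English description precedes it below -/
import Mathlib

section
/- Assume (A1), (A2), (A3) and the non-resonance condition (N): L(k,l) ≠ 0 for every (k,l) ∈ ℕ*×ℕ. Then the equation (t∂ₜ)^m u = F(t, x, {(t∂ₜ)^j ∂ₓ^α u}_{(j,α)∈I_m}) admits a unique formal power series solution u(t,x) ∈ ℂ[[t,x]] satisfying u(0,x) ≡ 0. -/
open PowerSeries Finset
open scoped Classical

noncomputable section

/-- The index set `I_m = {(j,α) ∈ ℕ×ℕ : j+α ≤ m, j < m}` as a finset. -/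
def ImF (m : ℕ) : Finset (ℕ × ℕ) :=
  (Finset.range (m + 1) ×ˢ Finset.range (m + 1)).filter fun p => p.1 + p.2 ≤ m ∧ p.1 < m

/-- Coefficientwise derivative `∂ₓ` on `ℂ[[x]]`. -/
def dX (f : PowerSeries ℂ) : PowerSeries ℂ :=
  PowerSeries.mk fun l => ((l + 1 : ℕ) : ℂ) * PowerSeries.coeff (l + 1) f

/-- `|ν| = Σ_{(j,α)} ν_{j,α}` for a multi-index `ν`. -/
def nsum (ν : (ℕ × ℕ) →₀ ℕ) : ℕ := ν.sum fun _ n => n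

/-- `(t∂ₜ)^j ∂ₓ^α u` as an element of `ℂ[[x]][[t]]`, for `u` given by its family of
`t`-coefficients `u_k(x) ∈ ℂ[[x]]`. -/
def Dop (j α : ℕ) (u : ℕ → PowerSeries ℂ) : PowerSeries (PowerSeries ℂ) :=
  PowerSeries.mk fun k => ((k : ℂ) ^ j) • (dX^[α] (u k))

/-- `u = Σ_k u_k(x) t^k` is a formal power series solution, with `u(0,x) ≡ 0`, of
`(t∂ₜ)^m u = F(t,x,{(t∂ₜ)^j ∂ₓ^α u}_{(j,α) ∈ I_m})`, where the holomorphic function `F`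
is given through its Taylor expansion
`F(t,x,z) = a(x) t + Σ_{(j,α) ∈ I_m} x^α c_{j,α}(x) z_{j,α} + Σ_{i+|ν| ≥ 2} a_{i,ν}(x) t^i z^ν`
(this encodes the assumptions (A₂) and (A₃): `F(0,x,0) ≡ 0` and `b_{j,α}(x) = x^α c_{j,α}(x)`).
The equation is stated on the coefficient of each power `t^k`; since `u(0,x) ≡ 0` the
nonlinear part only involves the finitely many multi-indices appearing in the sum. -/
def IsSol (m : ℕ) (a : PowerSeries ℂ) (c : ℕ × ℕ → PowerSeries ℂ)
    (A : ℕ → ((ℕ × ℕ) →₀ ℕ) → PowerSeries ℂ) (u : ℕ → PowerSeries ℂ) : Prop :=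
  u 0 = 0 ∧ ∀ k : ℕ,
    ((k : ℂ) ^ m) • u k =
      (if k = 1 then a else 0)
        + ∑ p ∈ ImF m, (X ^ p.2 * c p) * (((k : ℂ) ^ p.1) • (dX^[p.2] (u k)))
        + ∑ i ∈ Finset.range (k + 1), ∑ n ∈ Finset.range (k + 1),
            ∑ ν ∈ Finset.finsuppAntidiag (ImF m) n,
              A i ν * (PowerSeries.coeff (R := PowerSeries ℂ) (k - i))
                  (∏ p ∈ ImF m, Dop p.1 p.2 u ^ ν p)

/-- (A₁): Cauchy-type estimates on all the Taylor data of `F`, expressing that `F` is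
holomorphic on a polydisk centered at the origin of `ℂ_t × ℂ_x × ℂ^N_z`. -/
def HoloData (a : PowerSeries ℂ) (c : ℕ × ℕ → PowerSeries ℂ)
    (A : ℕ → ((ℕ × ℕ) →₀ ℕ) → PowerSeries ℂ) : Prop :=
  ∃ M r : ℝ, 0 < r ∧
    (∀ l, ‖PowerSeries.coeff (R := ℂ) l a‖ ≤ M / r ^ l) ∧
    (∀ p l, ‖PowerSeries.coeff (R := ℂ) l (c p)‖ ≤ M / r ^ l) ∧
    (∀ i ν l, ‖PowerSeries.coeff (R := ℂ) l (A i ν)‖ ≤ M / r ^ (i + nsum ν + l))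

/-- `R₂(t,x,z) = Σ a_{i,ν}(x) t^i z^ν` consists only of terms of total degree `≥ 2`
in `(t,z)`, with `z` indexed by `I_m`. -/
def StructA (m : ℕ) (A : ℕ → ((ℕ × ℕ) →₀ ℕ) → PowerSeries ℂ) : Prop :=
  ∀ i ν, A i ν ≠ 0 → 2 ≤ i + nsum ν ∧ ν.support ⊆ ImF m

/-- `L(λ,ρ) = λ^m − Σ_{(j,α) ∈ I_m} c_{j,α}(0) λ^j ρ(ρ−1)⋯(ρ−α+1)`, evaluated at `(k,l)`. -/
def Lfun (m : ℕ) (c : ℕ × ℕ → PowerSeries ℂ) (k l : ℕ) : ℂ :=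
  (k : ℂ) ^ m - ∑ p ∈ ImF m, PowerSeries.constantCoeff (R := ℂ) (c p) * (k : ℂ) ^ p.1 *
      ∏ i ∈ Finset.range p.2, ((l : ℂ) - (i : ℂ))

/-- The non-resonance condition (N). -/
def Ncond (m : ℕ) (c : ℕ × ℕ → PowerSeries ℂ) : Prop :=
  ∀ k l : ℕ, 1 ≤ k → Lfun m c k l ≠ 0


/-! ### Auxiliary lemmas -/

lemma dX_sub (f g : PowerSeries ℂ) : dX (f - g) = dX f - dX g := by
  ext l; simp [dX, mul_sub]

lemma dX_zero : dX 0 = 0 := by ext l; simp [dX]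

lemma iter_dX_sub (α : ℕ) (f g : PowerSeries ℂ) : dX^[α] (f - g) = dX^[α] f - dX^[α] g := by
  induction α generalizing f g with
  | zero => simp
  | succ n ih => simp [Function.iterate_succ_apply, dX_sub, ih]

lemma iter_dX_zero (α : ℕ) : dX^[α] (0 : PowerSeries ℂ) = 0 := by
  induction α with
  | zero => simp
  | succ n ih => simp [Function.iterate_succ_apply, dX_zero, ih]

lemma coeff_iter_dX (α l : ℕ) (f : PowerSeries ℂ) :
    PowerSeries.coeff (R := ℂ) l (dX^[α] f)
      = (∏ i ∈ range α, ((l + 1 + i : ℕ) : ℂ)) * PowerSeries.coeff (R := ℂ) (l + α) f := by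
  induction α generalizing f with
  | zero => simp
  | succ n ih =>
    rw [Function.iterate_succ_apply, ih]
    simp only [dX, coeff_mk]
    rw [prod_range_succ]
    have h1 : l + n + 1 = l + (n + 1) := by omega
    rw [h1]
    push_cast
    ring

/-- The linear operator `w ↦ k^m • w − Σ X^α c_p (k^j • ∂ₓ^α w)`. -/
def Sop (m k : ℕ) (c : ℕ × ℕ → PowerSeries ℂ) (w : PowerSeries ℂ) : PowerSeries ℂ :=
  ((k : ℂ) ^ m) • w - ∑ p ∈ ImF m, (X ^ p.2 * c p) * (((k : ℂ) ^ p.1) • dX^[p.2] w)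

lemma Sop_sub (m k : ℕ) (c : ℕ × ℕ → PowerSeries ℂ) (v w : PowerSeries ℂ) :
    Sop m k c (v - w) = Sop m k c v - Sop m k c w := by
  simp only [Sop, iter_dX_sub, smul_sub, mul_sub, Finset.sum_sub_distrib]
  ring

lemma Sop_zero (m k : ℕ) (c : ℕ × ℕ → PowerSeries ℂ) : Sop m k c 0 = 0 := by
  simp [Sop, iter_dX_zero]

lemma coeff_linterm (k j α l : ℕ) (cp w : PowerSeries ℂ)
    (hw : ∀ l' < l, PowerSeries.coeff (R := ℂ) l' w = 0) :
    PowerSeries.coeff (R := ℂ) l ((X ^ α * cp) * (((k : ℂ) ^ j) • dX^[α] w))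
      = PowerSeries.constantCoeff (R := ℂ) cp * (k : ℂ) ^ j *
          (∏ i ∈ Finset.range α, ((l : ℂ) - (i : ℂ))) * PowerSeries.coeff (R := ℂ) l w := by
  by_cases hαl : α ≤ l
  · rw [mul_assoc]
    obtain ⟨d, rfl⟩ : ∃ d, l = d + α := ⟨l - α, by omega⟩
    rw [PowerSeries.coeff_X_pow_mul, PowerSeries.coeff_mul,
      Finset.sum_eq_single (0, d)]
    · simp only [PowerSeries.coeff_smul, coeff_iter_dX, smul_eq_mul,
        PowerSeries.coeff_zero_eq_constantCoeff]
      have hprod : (∏ i ∈ range α, ((d + 1 + i : ℕ) : ℂ))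
          = ∏ i ∈ range α, (((d + α : ℕ) : ℂ) - (i : ℂ)) := by
        rw [← Finset.prod_range_reflect (fun i => (((d + α : ℕ)) : ℂ) - (i : ℂ)) α]
        refine Finset.prod_congr rfl fun i hi => ?_
        rw [Finset.mem_range] at hi
        rw [eq_sub_iff_add_eq, ← Nat.cast_add]
        norm_cast
        omega
      rw [hprod]
      ring
    · rintro ⟨s, s'⟩ hb hne
      rw [Finset.HasAntidiagonal.mem_antidiagonal] at hb
      have hs : s ≠ 0 := by
        rintro rfl
        exact hne (by simp [← hb])
      have : s' + α < d + α := by omega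
      simp [PowerSeries.coeff_smul, coeff_iter_dX, hw _ this]
    · intro h
      exact absurd (Finset.HasAntidiagonal.mem_antidiagonal.mpr (by simp)) h
  · have hd : (X : PowerSeries ℂ) ^ α ∣ (X ^ α * cp) * (((k : ℂ) ^ j) • dX^[α] w) :=
      dvd_mul_of_dvd_left (dvd_mul_right _ _) _
    have h0 : PowerSeries.coeff (R := ℂ) l ((X ^ α * cp) * (((k : ℂ) ^ j) • dX^[α] w)) = 0 :=
      PowerSeries.X_pow_dvd_iff.mp hd l (by omega)
    have hp : (∏ i ∈ Finset.range α, ((l : ℂ) - (i : ℂ))) = 0 :=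
      Finset.prod_eq_zero (Finset.mem_range.mpr (by omega)) (sub_self _)
    rw [h0, hp]
    ring

lemma coeff_Sop_diag (m k : ℕ) (c : ℕ × ℕ → PowerSeries ℂ) (l : ℕ) (w : PowerSeries ℂ)
    (hw : ∀ l' < l, PowerSeries.coeff (R := ℂ) l' w = 0) :
    PowerSeries.coeff (R := ℂ) l (Sop m k c w) = Lfun m c k l * PowerSeries.coeff (R := ℂ) l w := by
  simp only [Sop, map_sub, PowerSeries.coeff_smul, map_sum, smul_eq_mul]
  rw [Lfun, sub_mul, Finset.sum_mul]
  congr 1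
  exact Finset.sum_congr rfl fun p hp => coeff_linterm k p.1 p.2 l (c p) w hw

def trnc (l : ℕ) (w : PowerSeries ℂ) : PowerSeries ℂ :=
  PowerSeries.mk fun l' => if l' < l then PowerSeries.coeff (R := ℂ) l' w else 0

lemma coeff_Sop_split (m k : ℕ) (c : ℕ × ℕ → PowerSeries ℂ) (l : ℕ) (w : PowerSeries ℂ) :
    PowerSeries.coeff (R := ℂ) l (Sop m k c w)
      = PowerSeries.coeff (R := ℂ) l (Sop m k c (trnc l w)) + Lfun m c k l * PowerSeries.coeff (R := ℂ) l w := by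
  have h1 : PowerSeries.coeff (R := ℂ) l (Sop m k c (w - trnc l w))
      = Lfun m c k l * PowerSeries.coeff (R := ℂ) l (w - trnc l w) := by
    apply coeff_Sop_diag
    intro l' hl'
    simp [trnc, hl']
  rw [Sop_sub] at h1
  simp only [map_sub] at h1
  have h2 : PowerSeries.coeff (R := ℂ) l (trnc l w) = 0 := by simp [trnc]
  rw [h2, sub_zero] at h1
  linear_combination h1

lemma Sop_inj (m k : ℕ) (c : ℕ × ℕ → PowerSeries ℂ) (hL : ∀ l, Lfun m c k l ≠ 0)
    (w : PowerSeries ℂ) (hw : Sop m k c w = 0) : w = 0 := by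
  have H : ∀ l, PowerSeries.coeff (R := ℂ) l w = 0 := by
    intro l
    induction l using Nat.strong_induction_on with
    | _ l ih =>
      have h := coeff_Sop_split m k c l w
      rw [hw, map_zero] at h
      have ht : trnc l w = 0 := by
        ext l'
        simp only [trnc, coeff_mk, map_zero]
        split_ifs with h'
        · exact ih l' h'
        · rfl
      rw [ht, Sop_zero, map_zero, zero_add] at h
      exact (mul_eq_zero.mp h.symm).resolve_left (hL l)
  ext l
  simp [H l]

noncomputable def linCoef (m k : ℕ) (c : ℕ × ℕ → PowerSeries ℂ) (g : PowerSeries ℂ) : ℕ → ℂ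
  | l => (PowerSeries.coeff (R := ℂ) l g - PowerSeries.coeff (R := ℂ) l (Sop m k c
      (PowerSeries.mk fun l' => if h : l' < l then linCoef m k c g l' else 0))) / Lfun m c k l
  termination_by l => l
  decreasing_by exact h

lemma Sop_linCoef (m k : ℕ) (c : ℕ × ℕ → PowerSeries ℂ) (hL : ∀ l, Lfun m c k l ≠ 0)
    (g : PowerSeries ℂ) : Sop m k c (PowerSeries.mk (linCoef m k c g)) = g := by
  ext l
  rw [coeff_Sop_split]
  have ht : trnc l (PowerSeries.mk (linCoef m k c g))
      = PowerSeries.mk fun l' => if h : l' < l then linCoef m k c g l' else 0 := by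
    ext l'
    simp [trnc]
  rw [ht, coeff_mk]
  conv_lhs => rw [linCoef]
  rw [mul_comm (Lfun m c k l), div_mul_cancel₀ _ (hL l)]
  ring
end

noncomputable section

lemma dvd_prod_sub {ι R : Type*} [CommRing R] (x : R) (s : Finset ι)
    (F G : ι → R) (ν : ι → ℕ) (h : ∀ p ∈ s, x ∣ F p - G p) :
    x ∣ (∏ p ∈ s, F p ^ ν p) - ∏ p ∈ s, G p ^ ν p := by
  rw [← Ideal.mem_span_singleton, ← Ideal.Quotient.mk_eq_mk_iff_sub_mem, map_prod, map_prod]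
  refine Finset.prod_congr rfl fun p hp => ?_
  rw [map_pow, map_pow,
    (Ideal.Quotient.mk_eq_mk_iff_sub_mem _ _).mpr (Ideal.mem_span_singleton.mpr (h p hp))]

lemma dvd_Dop_sub (d j α : ℕ) (u u' : ℕ → PowerSeries ℂ) (h : ∀ κ ≤ d, u κ = u' κ) :
    (X : PowerSeries (PowerSeries ℂ)) ^ (d + 1) ∣ Dop j α u - Dop j α u' := by
  rw [PowerSeries.X_pow_dvd_iff]
  intro e he
  rw [map_sub]
  simp [Dop, h e (by omega)]

lemma coeff_prod_Dop_congr (m d : ℕ) (ν : (ℕ × ℕ) →₀ ℕ) (u u' : ℕ → PowerSeries ℂ)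
    (h : ∀ κ ≤ d, u κ = u' κ) (e : ℕ) (he : e ≤ d) :
    PowerSeries.coeff (R := PowerSeries ℂ) e (∏ p ∈ ImF m, Dop p.1 p.2 u ^ ν p)
      = PowerSeries.coeff (R := PowerSeries ℂ) e (∏ p ∈ ImF m, Dop p.1 p.2 u' ^ ν p) := by
  have hd : (X : PowerSeries (PowerSeries ℂ)) ^ (d + 1) ∣
      (∏ p ∈ ImF m, Dop p.1 p.2 u ^ ν p) - ∏ p ∈ ImF m, Dop p.1 p.2 u' ^ ν p :=
    dvd_prod_sub _ _ _ _ _ (fun p _ => dvd_Dop_sub d p.1 p.2 u u' h)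
  have h0 := PowerSeries.X_pow_dvd_iff.mp hd e (by omega)
  rw [map_sub, sub_eq_zero] at h0
  exact h0

lemma eq_X_mul_shift (f : PowerSeries (PowerSeries ℂ))
    (hf : PowerSeries.coeff (R := PowerSeries ℂ) 0 f = 0) :
    f = X * PowerSeries.mk fun e => PowerSeries.coeff (R := PowerSeries ℂ) (e + 1) f := by
  ext e
  cases e with
  | zero =>
    simp only [PowerSeries.coeff_zero_eq_constantCoeff] at hf ⊢
    simp [hf]
  | succ n => simp [PowerSeries.coeff_succ_X_mul]

lemma coeff_prod_Dop_congr_top (m k : ℕ) (ν : (ℕ × ℕ) →₀ ℕ) (u u' : ℕ → PowerSeries ℂ)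
    (hu0 : u 0 = 0) (hu0' : u' 0 = 0) (h : ∀ κ < k, u κ = u' κ)
    (hν : 2 ≤ ∑ p ∈ ImF m, ν p) :
    PowerSeries.coeff (R := PowerSeries ℂ) k (∏ p ∈ ImF m, Dop p.1 p.2 u ^ ν p)
      = PowerSeries.coeff (R := PowerSeries ℂ) k (∏ p ∈ ImF m, Dop p.1 p.2 u' ^ ν p) := by
  set n := ∑ p ∈ ImF m, ν p with hn
  have key : ∀ v : ℕ → PowerSeries ℂ, v 0 = 0 →
      ∏ p ∈ ImF m, Dop p.1 p.2 v ^ ν p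
        = X ^ n * ∏ p ∈ ImF m,
            (PowerSeries.mk fun e => PowerSeries.coeff (R := PowerSeries ℂ) (e + 1) (Dop p.1 p.2 v)) ^ ν p := by
    intro v hv
    calc ∏ p ∈ ImF m, Dop p.1 p.2 v ^ ν p
        = ∏ p ∈ ImF m, (X ^ ν p *
            (PowerSeries.mk fun e => PowerSeries.coeff (R := PowerSeries ℂ) (e + 1) (Dop p.1 p.2 v)) ^ ν p) := by
          refine Finset.prod_congr rfl fun p _ => ?_
          rw [← mul_pow, ← eq_X_mul_shift _ (by simp [Dop, hv, iter_dX_zero])]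
      _ = _ := by rw [Finset.prod_mul_distrib, Finset.prod_pow_eq_pow_sum]
  rw [key u hu0, key u' hu0']
  by_cases hnk : n ≤ k
  · obtain ⟨d, rfl⟩ : ∃ d, k = d + n := ⟨k - n, by omega⟩
    rw [PowerSeries.coeff_X_pow_mul, PowerSeries.coeff_X_pow_mul]
    have hdvd : (X : PowerSeries (PowerSeries ℂ)) ^ (d + 1) ∣
        (∏ p ∈ ImF m, (PowerSeries.mk fun e => PowerSeries.coeff (R := PowerSeries ℂ) (e + 1) (Dop p.1 p.2 u)) ^ ν p)
          - ∏ p ∈ ImF m, (PowerSeries.mk fun e => PowerSeries.coeff (R := PowerSeries ℂ) (e + 1) (Dop p.1 p.2 u')) ^ ν p := by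
      refine dvd_prod_sub _ _ _ _ _ fun p _ => ?_
      rw [PowerSeries.X_pow_dvd_iff]
      intro e he
      rw [map_sub]
      simp [Dop, h (e + 1) (by omega)]
    have h0 := PowerSeries.X_pow_dvd_iff.mp hdvd d (by omega)
    rw [map_sub, sub_eq_zero] at h0
    exact h0
  · have hz : ∀ W : PowerSeries (PowerSeries ℂ),
        PowerSeries.coeff (R := PowerSeries ℂ) k (X ^ n * W) = 0 := fun W =>
      PowerSeries.X_pow_dvd_iff.mp (dvd_mul_right _ _) k (by omega)
    rw [hz, hz]

lemma NL_congr (m k : ℕ) (A : ℕ → ((ℕ × ℕ) →₀ ℕ) → PowerSeries ℂ) (hA2 : StructA m A)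
    (u u' : ℕ → PowerSeries ℂ) (hu0 : u 0 = 0) (hu0' : u' 0 = 0)
    (h : ∀ κ < k, u κ = u' κ) (hk : 1 ≤ k) :
    (∑ i ∈ Finset.range (k + 1), ∑ n ∈ Finset.range (k + 1),
        ∑ ν ∈ Finset.finsuppAntidiag (ImF m) n,
          A i ν * (PowerSeries.coeff (R := PowerSeries ℂ) (k - i))
            (∏ p ∈ ImF m, Dop p.1 p.2 u ^ ν p))
      = ∑ i ∈ Finset.range (k + 1), ∑ n ∈ Finset.range (k + 1),
          ∑ ν ∈ Finset.finsuppAntidiag (ImF m) n,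
            A i ν * (PowerSeries.coeff (R := PowerSeries ℂ) (k - i))
              (∏ p ∈ ImF m, Dop p.1 p.2 u' ^ ν p) := by
  refine Finset.sum_congr rfl fun i hi => Finset.sum_congr rfl fun n hn =>
    Finset.sum_congr rfl fun ν hν => ?_
  by_cases hA : A i ν = 0
  · simp [hA]
  congr 1
  obtain ⟨h2, _⟩ := hA2 i ν hA
  have hsum : (ImF m).sum ν = n := (Finset.mem_finsuppAntidiag.mp hν).1
  have hnsum : nsum ν = n := by
    have := (Finset.mem_finsuppAntidiag'.mp hν).1
    exact this
  rcases Nat.eq_zero_or_pos i with hi0 | hi1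
  · subst hi0
    have hn2 : 2 ≤ ∑ p ∈ ImF m, ν p := by
      rw [hsum]
      simpa [hnsum] using h2
    simpa using coeff_prod_Dop_congr_top m k ν u u' hu0 hu0' h hn2
  · exact coeff_prod_Dop_congr m (k - 1) ν u u' (fun κ hκ => h κ (by omega)) (k - i) (by omega)
noncomputable def solU (m : ℕ) (a : PowerSeries ℂ) (c : ℕ × ℕ → PowerSeries ℂ)
    (A : ℕ → ((ℕ × ℕ) →₀ ℕ) → PowerSeries ℂ) : ℕ → PowerSeries ℂ
  | k =>
    if k = 0 then 0 else
      PowerSeries.mk (linCoef m k c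
        ((if k = 1 then a else 0) +
          ∑ i ∈ Finset.range (k + 1), ∑ n ∈ Finset.range (k + 1),
            ∑ ν ∈ Finset.finsuppAntidiag (ImF m) n,
              A i ν * (PowerSeries.coeff (R := PowerSeries ℂ) (k - i))
                (∏ p ∈ ImF m, Dop p.1 p.2
                    (fun κ => if h : κ < k then solU m a c A κ else 0) ^ ν p)))
  termination_by k => k
  decreasing_by exact h


/-- **Proposition 1.1** (Maillet type theorem paper, Lastra–Tahara).
Under the assumptions (A₁), (A₂), (A₃) and the non-resonance condition (N), the equation
`(t∂ₜ)^m u = F(t,x,{(t∂ₜ)^j ∂ₓ^α u}_{(j,α) ∈ I_m})` admits a unique formal power series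
solution `u(t,x) ∈ ℂ[[t,x]]` with `u(0,x) ≡ 0`. -/
theorem formal_solution_exists_unique (m : ℕ) (hm : 1 ≤ m)
    (a : PowerSeries ℂ) (c : ℕ × ℕ → PowerSeries ℂ)
    (A : ℕ → ((ℕ × ℕ) →₀ ℕ) → PowerSeries ℂ)
    (hA1 : HoloData a c A) (hA2 : StructA m A) (hN : Ncond m c) :
    ∃! u : ℕ → PowerSeries ℂ, IsSol m a c A u := by
  set u : ℕ → PowerSeries ℂ := solU m a c A with hu
  have hu0 : u 0 = 0 := by rw [hu, solU]; simp
  have heq : ∀ k : ℕ, ((k : ℂ) ^ m) • u k =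
      (if k = 1 then a else 0)
        + ∑ p ∈ ImF m, (X ^ p.2 * c p) * (((k : ℂ) ^ p.1) • (dX^[p.2] (u k)))
        + ∑ i ∈ Finset.range (k + 1), ∑ n ∈ Finset.range (k + 1),
            ∑ ν ∈ Finset.finsuppAntidiag (ImF m) n,
              A i ν * (PowerSeries.coeff (R := PowerSeries ℂ) (k - i))
                  (∏ p ∈ ImF m, Dop p.1 p.2 u ^ ν p) := by
    intro k
    rcases Nat.eq_zero_or_pos k with rfl | hk
    · rw [hu0]
      rw [Finset.sum_range_one, Finset.sum_range_one]
      have hz : ∑ ν ∈ Finset.finsuppAntidiag (ImF m) 0,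
          A 0 ν * (PowerSeries.coeff (R := PowerSeries ℂ) (0 - 0))
            (∏ p ∈ ImF m, Dop p.1 p.2 u ^ ν p) = 0 := by
        refine Finset.sum_eq_zero fun ν hν => ?_
        have hz0 : A 0 ν = 0 := by
          by_contra hA
          have h2 := (hA2 0 ν hA).1
          have hns : nsum ν = 0 := (Finset.mem_finsuppAntidiag'.mp hν).1
          omega
        rw [hz0, zero_mul]
      rw [hz]
      simp [iter_dX_zero]
    · have hLk : ∀ l, Lfun m c k l ≠ 0 := fun l => hN k l hk
      set v : ℕ → PowerSeries ℂ := fun κ => if h : κ < k then solU m a c A κ else 0 with hv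
      have hdef : u k = PowerSeries.mk (linCoef m k c
          ((if k = 1 then a else 0) +
            ∑ i ∈ Finset.range (k + 1), ∑ n ∈ Finset.range (k + 1),
              ∑ ν ∈ Finset.finsuppAntidiag (ImF m) n,
                A i ν * (PowerSeries.coeff (R := PowerSeries ℂ) (k - i))
                  (∏ p ∈ ImF m, Dop p.1 p.2 v ^ ν p))) := by
        rw [hu]
        conv_lhs => rw [solU]
        rw [if_neg (by omega)]
      have hS : Sop m k c (u k) =
          (if k = 1 then a else 0) +
            ∑ i ∈ Finset.range (k + 1), ∑ n ∈ Finset.range (k + 1),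
              ∑ ν ∈ Finset.finsuppAntidiag (ImF m) n,
                A i ν * (PowerSeries.coeff (R := PowerSeries ℂ) (k - i))
                  (∏ p ∈ ImF m, Dop p.1 p.2 v ^ ν p) := by
        rw [hdef]
        exact Sop_linCoef m k c hLk _
      have hv0 : v 0 = 0 := by
        simp only [hv]
        rw [dif_pos hk]
        exact hu0
      have hNL := NL_congr m k A hA2 v u hv0 hu0
        (fun κ hκ => by simp [hv, hκ, hu]) hk
      rw [hNL] at hS
      rw [Sop] at hS
      linear_combination hS
  refine ⟨u, ⟨hu0, heq⟩, ?_⟩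
  intro u' hu'
  funext k
  induction k using Nat.strong_induction_on with
  | _ k ih =>
    rcases Nat.eq_zero_or_pos k with rfl | hk
    · rw [hu'.1, hu0]
    · have e1 := hu'.2 k
      have e2 := heq k
      have hNL := NL_congr m k A hA2 u' u hu'.1 hu0 (fun κ hκ => ih κ hκ) hk
      rw [hNL] at e1
      have hS : Sop m k c (u' k - u k) = 0 := by
        rw [Sop_sub, Sop, Sop]
        linear_combination e1 - e2
      have := Sop_inj m k c (fun l => hN k l hk) _ hS
      exact sub_eq_zero.mp this
end
end

section
/- Let f(x), g(x) ∈ ℂ[[x]], σ ≥ 1 and m ∈ ℕ. Then: (i) B_σ[|f|](x) = B_σ^{(0)}[|f|](x) ≪ B_σ^{(1)}[|f|](x) ≪ B_σ^{(2)}[|f|](x) ≪ ⋯; (ii) B_σ^{(m)}[fg](x) ≪ B_σ^{(m)}[|f|](x) · B_σ^{(m)}[|g|](x); (iii) B_σ^{(m)}[x^k f](x) = x^k B_σ^{(m−k)}[f](x) for every 1 ≤ k ≤ m. -/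
open PowerSeries

noncomputable section

/-- `|f|(x) = Σ |f_l| x^l` for a complex formal power series `f`. -/
def absS (f : PowerSeries ℂ) : PowerSeries ℝ :=
  PowerSeries.mk fun l => ‖PowerSeries.coeff l f‖

/-- The modified formal Borel transform
`B_σ^{(m)}[f](x) = Σ_{l≥0} (f_l/([l−m]₊!)^{σ−1}) x^l` (real coefficients). -/
def BorR (σ : ℝ) (m : ℕ) (f : PowerSeries ℝ) : PowerSeries ℝ :=
  PowerSeries.mk fun l => PowerSeries.coeff l f / ((l - m).factorial : ℝ) ^ (σ - 1)

/-- The modified formal Borel transform (complex coefficients). -/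
def BorC (σ : ℝ) (m : ℕ) (f : PowerSeries ℂ) : PowerSeries ℂ :=
  PowerSeries.mk fun l =>
    PowerSeries.coeff l f / (((((l - m).factorial : ℝ) ^ (σ - 1) : ℝ) : ℂ))

/-- `g ≪ h`: every coefficient of `h − g` is nonnegative. -/
def lleR (g h : PowerSeries ℝ) : Prop :=
  ∀ l, PowerSeries.coeff l g ≤ PowerSeries.coeff l h

/-- Coefficientwise derivative `∂ₓ` on `ℝ[[x]]`. -/
def dXR (f : PowerSeries ℝ) : PowerSeries ℝ :=
  PowerSeries.mk fun l => ((l + 1 : ℕ) : ℝ) * PowerSeries.coeff (l + 1) f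

/-- The plain formal Borel transform `B_σ[f](x) = Σ (f_l/l!^{σ−1}) x^l`. -/
def BorPlainR (σ : ℝ) (f : PowerSeries ℝ) : PowerSeries ℝ :=
  PowerSeries.mk fun l => PowerSeries.coeff l f / (l.factorial : ℝ) ^ (σ - 1)

/-- **Lemma 3.1** (Lastra–Tahara). For `f, g ∈ ℂ[[x]]`, `σ ≥ 1` and `m ∈ ℕ`:
(i) `B_σ[|f|] = B_σ^{(0)}[|f|] ≪ B_σ^{(1)}[|f|] ≪ B_σ^{(2)}[|f|] ≪ ⋯`;
(ii) `B_σ^{(m)}[fg] ≪ B_σ^{(m)}[|f|] ⋅ B_σ^{(m)}[|g|]`;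
(iii) `B_σ^{(m)}[x^k f] = x^k B_σ^{(m−k)}[f]` for `1 ≤ k ≤ m`. -/
theorem borel_basic_properties (σ : ℝ) (hσ : 1 ≤ σ) (m : ℕ) (f g : PowerSeries ℂ) :
    (BorPlainR σ (absS f) = BorR σ 0 (absS f)) ∧
    (∀ n : ℕ, lleR (BorR σ n (absS f)) (BorR σ (n + 1) (absS f))) ∧
    (∀ l : ℕ, ‖PowerSeries.coeff l (BorC σ m (f * g))‖ ≤
        PowerSeries.coeff l (BorR σ m (absS f) * BorR σ m (absS g))) ∧
    (∀ k : ℕ, 1 ≤ k → k ≤ m → BorC σ m (X ^ k * f) = X ^ k * BorC σ (m - k) f) := by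

  have hσ0 : 0 ≤ σ - 1 := by linarith
  refine ⟨?_, ?_, ?_, ?_⟩
  · ext l
    simp [BorPlainR, BorR]
  · intro n l
    simp only [BorR, absS, coeff_mk]
    apply div_le_div_of_nonneg_left (by positivity) (by positivity)
    exact Real.rpow_le_rpow (by positivity)
      (by exact_mod_cast Nat.factorial_le (by omega)) hσ0
  · intro l
    simp only [BorC, BorR, absS, coeff_mk, PowerSeries.coeff_mul]
    have hc : (0:ℝ) < ((l - m).factorial : ℝ) ^ (σ - 1) := by positivity
    rw [norm_div, Complex.norm_real, Real.norm_eq_abs, abs_of_pos hc]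
    rw [div_le_iff₀ hc]
    calc ‖∑ p ∈ Finset.HasAntidiagonal.antidiagonal l, (coeff p.1) f * (coeff p.2) g‖
        ≤ ∑ p ∈ Finset.HasAntidiagonal.antidiagonal l, ‖(coeff p.1) f * (coeff p.2) g‖ :=
          norm_sum_le _ _
      _ ≤ (∑ p ∈ Finset.HasAntidiagonal.antidiagonal l,
            ‖(coeff p.1) f‖ / ((p.1 - m).factorial : ℝ) ^ (σ - 1) *
              (‖(coeff p.2) g‖ / ((p.2 - m).factorial : ℝ) ^ (σ - 1))) *
            ((l - m).factorial : ℝ) ^ (σ - 1) := by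
          rw [Finset.sum_mul]
          apply Finset.sum_le_sum
          intro p hp
          have hpl : p.1 + p.2 = l := Finset.HasAntidiagonal.mem_antidiagonal.mp hp
          have hfac : (p.1 - m).factorial * (p.2 - m).factorial ≤ (l - m).factorial := by
            calc (p.1 - m).factorial * (p.2 - m).factorial
                ≤ ((p.1 - m) + (p.2 - m)).factorial :=
                  Nat.le_of_dvd (Nat.factorial_pos _)
                    (Nat.factorial_mul_factorial_dvd_factorial_add _ _)
              _ ≤ (l - m).factorial := Nat.factorial_le (by omega)
          have ha : (0:ℝ) < ((p.1 - m).factorial : ℝ) ^ (σ - 1) := by positivity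
          have hb : (0:ℝ) < ((p.2 - m).factorial : ℝ) ^ (σ - 1) := by positivity
          have key : ((p.1 - m).factorial : ℝ) ^ (σ - 1) *
              ((p.2 - m).factorial : ℝ) ^ (σ - 1) ≤ ((l - m).factorial : ℝ) ^ (σ - 1) := by
            rw [← Real.mul_rpow (by positivity) (by positivity)]
            exact Real.rpow_le_rpow (by positivity) (by exact_mod_cast hfac) hσ0
          rw [norm_mul, div_mul_div_comm, div_mul_eq_mul_div, le_div_iff₀ (by positivity)]
          calc ‖(coeff p.1) f‖ * ‖(coeff p.2) g‖ *
                (((p.1 - m).factorial : ℝ) ^ (σ - 1) * ((p.2 - m).factorial : ℝ) ^ (σ - 1))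
              ≤ ‖(coeff p.1) f‖ * ‖(coeff p.2) g‖ * ((l - m).factorial : ℝ) ^ (σ - 1) := by
                apply mul_le_mul_of_nonneg_left key (by positivity)
            _ = ‖(coeff p.1) f‖ * ‖(coeff p.2) g‖ * ((l - m).factorial : ℝ) ^ (σ - 1) := rfl
  · intro k hk1 hkm
    ext l
    simp only [BorC, coeff_mk]
    rcases le_or_gt k l with h | h
    · obtain ⟨d, rfl⟩ : ∃ d, l = d + k := ⟨l - k, by omega⟩
      rw [PowerSeries.coeff_X_pow_mul, PowerSeries.coeff_X_pow_mul, coeff_mk]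
      have hdm : d + k - m = d - (m - k) := by omega
      rw [hdm]
    · have h1 : (coeff l) (X ^ k * f) = 0 := by
        rw [PowerSeries.coeff_X_pow_mul'] ; simp [not_le.mpr h]
      rw [h1, zero_div, PowerSeries.coeff_X_pow_mul']
      simp [not_le.mpr h]
end
end

section
/- Let m ∈ ℕ*, 0 < R ≤ 1, σ ≥ 1, and suppose f(x) ∈ ℂ[[x]] satisfies B_σ^{(m)}[|f|](x) ≪ C/(R−x)^a for some C > 0 and a ≥ 1. Then B_σ^{(m−1)}[∂ₓ|f|](x) ≪ aC/(R−x)^{a+1} and B_σ^{(m)}[∂ₓ|f|](x) ≪ (a+σ)^σ e^σ C/(R−x)^{a+σ}. -/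
open PowerSeries

noncomputable section

/-- The formal power series `C/(R−x)^a = Σ_{j≥0} (C/R^{a+j}) (a(a+1)⋯(a+j−1)/j!) x^j`. -/
def geomPow (C R a : ℝ) : PowerSeries ℝ :=
  PowerSeries.mk fun j =>
    C / R ^ (a + (j : ℝ)) * ((∏ i ∈ Finset.range j, (a + (i : ℝ))) / (j.factorial : ℝ))

open Finset

lemma my_fact_step (m l : ℕ) (hm : 1 ≤ m) :
    (l + 1 - m).factorial ≤ (l + 1) * (l - m).factorial := by
  rcases le_or_gt m l with hml | hml
  · have e : l + 1 - m = (l - m) + 1 := by omega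
    rw [e, Nat.factorial_succ]
    exact Nat.mul_le_mul_right _ (by omega)
  · have e : l + 1 - m = 0 := by omega
    rw [e]
    calc Nat.factorial 0 = 1 := rfl
      _ ≤ (l + 1) * (l - m).factorial := Nat.one_le_iff_ne_zero.mpr
          (Nat.mul_ne_zero (by omega) (Nat.factorial_pos _).ne')

lemma my_prod_ratio (b s : ℝ) (hb : 1 ≤ b) (hs : 0 ≤ s) (l : ℕ) :
    ((l : ℝ) + 1) ^ s * ∏ i ∈ Finset.range l, (b + (i : ℝ))
      ≤ (b + s) ^ s * ∏ i ∈ Finset.range l, (b + s + (i : ℝ)) := by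
  have hb0 : (0:ℝ) < b := lt_of_lt_of_le one_pos hb
  have hQi : ∀ i : ℕ, (0:ℝ) < b + i := fun i => by positivity
  have hPi : ∀ i : ℕ, (0:ℝ) < b + s + i := fun i => by positivity
  have hQ : (0:ℝ) < ∏ i ∈ range l, (b + (i:ℝ)) := Finset.prod_pos fun i _ => hQi i
  have hP : (0:ℝ) < ∏ i ∈ range l, (b + s + (i:ℝ)) := Finset.prod_pos fun i _ => hPi i
  set L : ℕ → ℝ := fun i => Real.log (b + s + i) with hL
  have step : ∀ i : ℕ, s * (L (i+1) - L i)
      ≤ Real.log (b + s + (i:ℝ)) - Real.log (b + (i:ℝ)) := by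
    intro i
    have h1 : Real.log ((b + i) / (b + s + i)) ≤ (b + i)/(b + s + i) - 1 :=
      Real.log_le_sub_one_of_pos (by positivity)
    rw [Real.log_div (hQi i).ne' (hPi i).ne'] at h1
    have e1 : (b + i)/(b + s + i) - 1 = -(s/(b+s+(i:ℝ))) := by field_simp; ring
    rw [e1] at h1
    have h2 : Real.log ((b + s + ((i:ℝ)+1)) / (b + s + i)) ≤ (b + s + ((i:ℝ)+1))/(b+s+(i:ℝ)) - 1 :=
      Real.log_le_sub_one_of_pos (by positivity)
    rw [Real.log_div (by positivity) (hPi i).ne'] at h2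
    have e2 : (b + s + ((i:ℝ)+1))/(b+s+(i:ℝ)) - 1 = 1/(b+s+(i:ℝ)) := by field_simp; ring
    rw [e2] at h2
    have hcast : L (i+1) - L i = Real.log (b + s + ((i:ℝ)+1)) - Real.log (b + s + (i:ℝ)) := by
      simp only [hL]
      norm_num
    rw [hcast]
    have h3 : s * (Real.log (b + s + ((i:ℝ)+1)) - Real.log (b + s + (i:ℝ))) ≤ s * (1/(b+s+(i:ℝ))) :=
      mul_le_mul_of_nonneg_left h2 hs
    have h4 : s * (1/(b+s+(i:ℝ))) = s/(b+s+(i:ℝ)) := by ring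
    linarith
  have sum1 : s * (L l - L 0)
      ≤ ∑ i ∈ range l, (Real.log (b + s + (i:ℝ)) - Real.log (b + (i:ℝ))) := by
    rw [← Finset.sum_range_sub L l, Finset.mul_sum]
    exact Finset.sum_le_sum fun i _ => step i
  have hlogQ : Real.log (∏ i ∈ range l, (b + (i:ℝ))) = ∑ i ∈ range l, Real.log (b + (i:ℝ)) :=
    Real.log_prod fun i _ => (hQi i).ne'
  have hlogP : Real.log (∏ i ∈ range l, (b + s + (i:ℝ))) = ∑ i ∈ range l, Real.log (b + s + (i:ℝ)) :=
    Real.log_prod fun i _ => (hPi i).ne'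
  have hsumdiff : ∑ i ∈ range l, (Real.log (b + s + (i:ℝ)) - Real.log (b + (i:ℝ)))
      = Real.log (∏ i ∈ range l, (b + s + (i:ℝ))) - Real.log (∏ i ∈ range l, (b + (i:ℝ))) := by
    rw [hlogQ, hlogP, Finset.sum_sub_distrib]
  rw [hsumdiff] at sum1
  have hL0 : L 0 = Real.log (b + s) := by simp [hL]
  have hLl : L l = Real.log (b + s + (l:ℝ)) := rfl
  rw [hL0, hLl] at sum1
  rw [← Real.log_le_log_iff (by positivity) (by positivity)]
  rw [Real.log_mul (by positivity) hQ.ne', Real.log_mul (by positivity) hP.ne',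
    Real.log_rpow (by positivity), Real.log_rpow (by positivity)]
  have hmono : Real.log ((l:ℝ) + 1) ≤ Real.log (b + s + (l:ℝ)) :=
    Real.log_le_log (by positivity) (by push_cast; linarith [Nat.cast_nonneg (α := ℝ) l])
  have hmono' : s * Real.log ((l:ℝ) + 1) ≤ s * Real.log (b + s + (l:ℝ)) :=
    mul_le_mul_of_nonneg_left hmono hs
  linarith

/-- **Lemma 3.2** (Lastra–Tahara). Let `m ∈ ℕ*`, `0 < R ≤ 1`, `σ ≥ 1`, and suppose
`f ∈ ℂ[[x]]` satisfies `B_σ^{(m)}[|f|](x) ≪ C/(R−x)^a` for some `C > 0`, `a ≥ 1`. Then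
`B_σ^{(m−1)}[∂ₓ|f|](x) ≪ aC/(R−x)^{a+1}` and
`B_σ^{(m)}[∂ₓ|f|](x) ≪ (a+σ)^σ e^σ C/(R−x)^{a+σ}`. -/
theorem borel_derivative_estimates (m : ℕ) (hm : 1 ≤ m) (R : ℝ) (hR0 : 0 < R) (hR1 : R ≤ 1)
    (σ : ℝ) (hσ : 1 ≤ σ) (f : PowerSeries ℂ) (C a : ℝ) (hC : 0 < C) (ha : 1 ≤ a)
    (h : lleR (BorR σ m (absS f)) (geomPow C R a)) :
    lleR (BorR σ (m - 1) (dXR (absS f))) (geomPow (a * C) R (a + 1)) ∧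
    lleR (BorR σ m (dXR (absS f))) (geomPow ((a + σ) ^ σ * Real.exp σ * C) R (a + σ)) := by
  simp only [lleR, BorR, dXR, absS, geomPow, PowerSeries.coeff_mk] at h ⊢
  have hs : (0:ℝ) ≤ σ - 1 := by linarith
  have hl!pos : ∀ n : ℕ, (0:ℝ) < (n.factorial : ℝ) := fun n => by
    exact_mod_cast Nat.factorial_pos n
  have hRp : ∀ x : ℝ, (0:ℝ) < R ^ x := fun x => Real.rpow_pos_of_pos hR0 x
  constructor
  · intro l
    have hsub : l - (m-1) = l + 1 - m := by omega
    rw [hsub]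
    have hid : a * C / R ^ (a + 1 + (l:ℝ)) * ((∏ i ∈ range l, (a + 1 + (i:ℝ))) / (l.factorial:ℝ))
        = ((l:ℝ)+1) * (C / R ^ (a + ((l+1:ℕ):ℝ)) *
            ((∏ i ∈ range (l+1), (a + (i:ℝ))) / ((l+1).factorial:ℝ))) := by
      have e1 : a + ((l+1:ℕ):ℝ) = a + 1 + (l:ℝ) := by push_cast; ring
      have e2 : ∏ i ∈ range (l+1), (a + (i:ℝ)) = (∏ i ∈ range l, (a + 1 + (i:ℝ))) * a := by
        rw [Finset.prod_range_succ']
        congr 1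
        · exact Finset.prod_congr rfl fun i _ => by push_cast; ring
        · simp
      rw [e1, e2, Nat.factorial_succ]
      push_cast
      field_simp
    rw [hid]
    have h1 := h (l+1)
    calc ((l+1:ℕ):ℝ) * ‖(PowerSeries.coeff (l+1)) f‖ / ((l + 1 - m).factorial : ℝ) ^ (σ-1)
        = ((l:ℝ)+1) * (‖(PowerSeries.coeff (l+1)) f‖ / ((l + 1 - m).factorial : ℝ) ^ (σ-1)) := by
          push_cast; ring
      _ ≤ ((l:ℝ)+1) * (C / R ^ (a + ((l+1:ℕ):ℝ)) *
            ((∏ i ∈ range (l+1), (a + (i:ℝ))) / ((l+1).factorial:ℝ))) :=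
          mul_le_mul_of_nonneg_left h1 (by positivity)
  · intro l
    set g := ‖(PowerSeries.coeff (l+1)) f‖ with hg
    have hg0 : 0 ≤ g := norm_nonneg _
    set D := ((l - m).factorial : ℝ) ^ (σ-1) with hD
    set F := (((l + 1 - m).factorial : ℝ)) ^ (σ-1) with hF
    have hDpos : 0 < D := Real.rpow_pos_of_pos (hl!pos _) _
    have hFpos : 0 < F := Real.rpow_pos_of_pos (hl!pos _) _
    set Q := ∏ i ∈ range l, (a + 1 + (i:ℝ)) with hQdef
    set P := ∏ i ∈ range l, (a + σ + (i:ℝ)) with hPdef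
    have hQpos : 0 < Q := Finset.prod_pos fun i _ => by positivity
    have hPpos : 0 < P := Finset.prod_pos fun i _ => by positivity
    set X := ((l:ℝ)+1) ^ (σ-1) with hX
    have hXpos : 0 < X := Real.rpow_pos_of_pos (by positivity) _
    -- bound F/D ≤ X
    have hFD : F ≤ X * D := by
      have h1 : ((l + 1 - m).factorial : ℝ) ≤ ((l+1:ℕ):ℝ) * ((l - m).factorial : ℝ) := by
        exact_mod_cast my_fact_step m l hm
      calc F ≤ (((l+1:ℕ):ℝ) * ((l - m).factorial : ℝ)) ^ (σ-1) :=
            Real.rpow_le_rpow (by positivity) h1 hs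
        _ = X * D := by
            rw [Real.mul_rpow (by positivity) (by positivity)]
            congr 2
            push_cast; ring
    -- hypothesis at l+1
    have h1 := h (l+1)
    have e2 : ∏ i ∈ range (l+1), (a + (i:ℝ)) = Q * a := by
      rw [hQdef, Finset.prod_range_succ']
      congr 1
      · exact Finset.prod_congr rfl fun i _ => by push_cast; ring
      · simp
    rw [e2] at h1
    have hcbound : g ≤ C / R ^ (a + ((l+1:ℕ):ℝ)) * (Q * a / ((l+1).factorial:ℝ)) * F := by
      rw [div_le_iff₀ hFpos] at h1
      exact h1
    -- main chain
    have key : X * Q ≤ (a + σ) ^ (σ-1) * P := by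
      have := my_prod_ratio (a+1) (σ-1) (by linarith) hs l
      have eb : a + 1 + (σ - 1) = a + σ := by ring
      rw [eb] at this
      exact this
    have hpow : (a + σ) ^ σ = (a + σ) * (a + σ) ^ (σ-1) := by
      have : σ = 1 + (σ - 1) := by ring
      rw [this]
      rw [Real.rpow_add (by positivity), Real.rpow_one]
      ring_nf
    have hRcomp : R ^ ((a+σ) + (l:ℝ)) ≤ R ^ (a + ((l+1:ℕ):ℝ)) := by
      apply Real.rpow_le_rpow_of_exponent_ge hR0 hR1
      push_cast; linarith
    have hexp : (1:ℝ) ≤ Real.exp σ := Real.one_le_exp (by linarith)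
    -- LHS ≤ (l+1) * (c * F) / D ≤ ...
    have step1 : ((l+1:ℕ):ℝ) * g / D
        ≤ ((l:ℝ)+1) * (C / R ^ (a + ((l+1:ℕ):ℝ)) * (Q * a / ((l+1).factorial:ℝ))) * X := by
      have hgF : g / D ≤ C / R ^ (a + ((l+1:ℕ):ℝ)) * (Q * a / ((l+1).factorial:ℝ)) * (F / D) := by
        rw [div_le_iff₀ hDpos]
        calc g ≤ C / R ^ (a + ((l+1:ℕ):ℝ)) * (Q * a / ((l+1).factorial:ℝ)) * F := hcbound
          _ = C / R ^ (a + ((l+1:ℕ):ℝ)) * (Q * a / ((l+1).factorial:ℝ)) * (F / D) * D := by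
              field_simp
      have hFDdiv : F / D ≤ X := (div_le_iff₀ hDpos).mpr hFD
      have hcnn : 0 ≤ C / R ^ (a + ((l+1:ℕ):ℝ)) * (Q * a / ((l+1).factorial:ℝ)) := by positivity
      calc ((l+1:ℕ):ℝ) * g / D = ((l:ℝ)+1) * (g / D) := by push_cast; ring
        _ ≤ ((l:ℝ)+1) * (C / R ^ (a + ((l+1:ℕ):ℝ)) * (Q * a / ((l+1).factorial:ℝ)) * (F/D)) :=
            mul_le_mul_of_nonneg_left hgF (by positivity)
        _ ≤ ((l:ℝ)+1) * (C / R ^ (a + ((l+1:ℕ):ℝ)) * (Q * a / ((l+1).factorial:ℝ)) * X) := by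
            apply mul_le_mul_of_nonneg_left _ (by positivity)
            exact mul_le_mul_of_nonneg_left hFDdiv hcnn
        _ = ((l:ℝ)+1) * (C / R ^ (a + ((l+1:ℕ):ℝ)) * (Q * a / ((l+1).factorial:ℝ))) * X := by
            ring
    have step2 : ((l:ℝ)+1) * (C / R ^ (a + ((l+1:ℕ):ℝ)) * (Q * a / ((l+1).factorial:ℝ))) * X
        = (a * (X * Q)) * ((C / R ^ (a + ((l+1:ℕ):ℝ))) / (l.factorial:ℝ)) := by
      rw [Nat.factorial_succ]
      push_cast
      have h1 : ((l:ℝ)+1) ≠ 0 := by positivity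
      have h2 : (l.factorial:ℝ) ≠ 0 := (hl!pos l).ne'
      field_simp
    have step3 : (a * (X * Q)) * ((C / R ^ (a + ((l+1:ℕ):ℝ))) / (l.factorial:ℝ))
        ≤ (a + σ) ^ σ * Real.exp σ * C / R ^ (a + σ + (l:ℝ)) * (P / (l.factorial:ℝ)) := by
      have hXQ : a * (X * Q) ≤ (a + σ) ^ σ * P := by
        calc a * (X * Q) ≤ a * ((a + σ) ^ (σ-1) * P) :=
              mul_le_mul_of_nonneg_left key (by linarith)
          _ ≤ (a + σ) * ((a + σ) ^ (σ-1) * P) := by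
              apply mul_le_mul_of_nonneg_right _ (by positivity)
              linarith
          _ = (a + σ) ^ σ * P := by rw [hpow]; ring
      have hRr : C / R ^ (a + ((l+1:ℕ):ℝ)) ≤ C / R ^ ((a+σ) + (l:ℝ)) :=
        div_le_div_of_nonneg_left hC.le (hRp _) hRcomp
      calc (a * (X * Q)) * ((C / R ^ (a + ((l+1:ℕ):ℝ))) / (l.factorial:ℝ))
          ≤ ((a + σ) ^ σ * P) * ((C / R ^ (a + ((l+1:ℕ):ℝ))) / (l.factorial:ℝ)) :=
            mul_le_mul_of_nonneg_right hXQ (by positivity)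
        _ ≤ ((a + σ) ^ σ * P) * ((C / R ^ ((a+σ) + (l:ℝ))) / (l.factorial:ℝ)) := by
            gcongr
        _ ≤ Real.exp σ * (((a + σ) ^ σ * P) * ((C / R ^ ((a+σ) + (l:ℝ))) / (l.factorial:ℝ))) := by
            apply le_mul_of_one_le_left (by positivity) hexp
        _ = (a + σ) ^ σ * Real.exp σ * C / R ^ (a + σ + (l:ℝ)) * (P / (l.factorial:ℝ)) := by
            ring
    calc ((l+1:ℕ):ℝ) * g / D ≤ _ := step1
      _ = _ := step2
      _ ≤ _ := step3
end
end

section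
/- Let m ∈ ℕ*, 0 < R ≤ 1, σ ≥ 1, and suppose f(x) ∈ ℂ[[x]] satisfies B_σ^{(m)}[|f|](x) ≪ C/(R−x)^a for some C > 0 and a ≥ 1. Then for every 1 ≤ μ ≤ m and every k ≥ 1: B_σ^{(m−μ)}[∂ₓ^μ|f|](x) ≪ a(a+1)⋯(a+μ−1)·C/(R−x)^{a+μ}, and B_σ^{(m−μ)}[∂ₓ^{k+μ}|f|](x) ≪ a(a+1)⋯(a+μ−1)·A_{μ,k}·C/(R−x)^{a+μ+kσ}, where A_{μ,k} = e^{kσ} ∏_{h=1}^{k} (a+μ+hσ)^σ. -/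
open PowerSeries Real Finset

noncomputable section

lemma fact_mul_prod (l : ℕ) : ∀ n : ℕ,
    (l.factorial : ℝ) * ∏ j ∈ range n, ((l : ℝ) + 1 + j) = ((l + n).factorial : ℝ)
  | 0 => by simp
  | (n+1) => by
    rw [prod_range_succ, ← mul_assoc, fact_mul_prod l n,
      show l + (n+1) = (l+n)+1 from rfl, Nat.factorial_succ]
    push_cast; ring

lemma fact_sub_le (ν l k : ℕ) :
    (l + k - ν).factorial * l.factorial ≤ (l - ν).factorial * (l + k).factorial := by
  induction k with
  | zero => simp [Nat.mul_comm, Nat.factorial_le (Nat.le_add_right _ _)]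
  | succ k ih =>
    have h1 : (l + (k+1) - ν).factorial ≤ (l + k + 1) * (l + k - ν).factorial := by
      rcases le_or_gt ν (l + k) with hc | hc
      · have he : l + (k+1) - ν = (l + k - ν) + 1 := by omega
        rw [he, Nat.factorial_succ]
        exact Nat.mul_le_mul_right _ (by omega)
      · have he : l + (k+1) - ν = 0 ∨ l + (k+1) - ν = 1 := by omega
        have he2 : l + k - ν = 0 := by omega
        rcases he with he | he <;> rw [he, he2] <;> simp <;> omega
    calc (l + (k+1) - ν).factorial * l.factorial
        ≤ ((l + k + 1) * (l + k - ν).factorial) * l.factorial :=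
          Nat.mul_le_mul_right _ h1
      _ = (l + k + 1) * ((l + k - ν).factorial * l.factorial) := by ring
      _ ≤ (l + k + 1) * ((l - ν).factorial * (l + k).factorial) :=
          Nat.mul_le_mul_left _ ih
      _ = (l - ν).factorial * ((l + k + 1) * (l + k).factorial) := by ring
      _ = (l - ν).factorial * (l + (k+1)).factorial := by
          rw [show l + (k+1) = (l+k)+1 from rfl, Nat.factorial_succ]

lemma key_factor {x c : ℝ} (hx : 0 < x) (hc : 0 ≤ c) :
    (x - c) * (x + 1) ^ c ≤ x * x ^ c := by
  rcases le_or_gt x c with hcase | hcase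
  · have h1 : (x - c) * (x+1)^c ≤ 0 :=
      mul_nonpos_of_nonpos_of_nonneg (by linarith) (Real.rpow_nonneg (by linarith) c)
    have h2 : 0 ≤ x * x^c := mul_nonneg hx.le (Real.rpow_nonneg hx.le c)
    linarith
  · have hx1 : (0:ℝ) < x + 1 := by linarith
    have hlog : Real.log (x+1) ≤ Real.log x + 1/x := by
      have h := Real.log_le_sub_one_of_pos (show (0:ℝ) < (x+1)/x by positivity)
      rw [Real.log_div (by linarith) hx.ne'] at h
      have hx' : (x+1)/x - 1 = 1/x := by field_simp; ring
      linarith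
    have h1 : (x+1)^c ≤ x^c * Real.exp (c / x) := by
      rw [Real.rpow_def_of_pos hx1, Real.rpow_def_of_pos hx, ← Real.exp_add]
      apply Real.exp_le_exp.2
      have h2 := mul_le_mul_of_nonneg_right hlog hc
      calc Real.log (x+1) * c ≤ (Real.log x + 1/x) * c := h2
        _ = Real.log x * c + c / x := by ring
    have h2 : (x - c) * Real.exp (c/x) ≤ x := by
      have ht : (1 - c/x) ≤ Real.exp (-(c/x)) := by
        have := Real.add_one_le_exp (-(c/x)); linarith
      have hxc : x - c = x * (1 - c/x) := by field_simp
      calc (x - c) * Real.exp (c/x) = x * (1 - c/x) * Real.exp (c/x) := by rw [← hxc]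
        _ ≤ x * Real.exp (-(c/x)) * Real.exp (c/x) := by
            apply mul_le_mul_of_nonneg_right (mul_le_mul_of_nonneg_left ht hx.le)
              (Real.exp_nonneg _)
        _ = x := by rw [mul_assoc, ← Real.exp_add]; simp
    calc (x - c) * (x+1)^c ≤ (x - c) * (x^c * Real.exp (c/x)) :=
          mul_le_mul_of_nonneg_left h1 (by linarith)
      _ = x^c * ((x - c) * Real.exp (c/x)) := by ring
      _ ≤ x^c * x := mul_le_mul_of_nonneg_left h2 (Real.rpow_nonneg hx.le c)
      _ = x * x^c := mul_comm _ _

lemma telescope {y c : ℝ} (hc : 0 ≤ c) (hyc : 0 < y - c) : ∀ l : ℕ,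
    (∏ i ∈ range l, (y - c + i)) * (y + l) ^ c
      ≤ y ^ c * ∏ i ∈ range l, (y + i)
  | 0 => by simp
  | (l+1) => by
    have hy : 0 < y := by linarith
    have ih := telescope hc hyc l
    have hfac : 0 ≤ ∏ i ∈ range l, (y - c + i) :=
      Finset.prod_nonneg fun i _ => by positivity
    rw [prod_range_succ, prod_range_succ]
    have hkey : (y - c + l) * ((y + l) + 1) ^ c ≤ (y + l) * (y + l) ^ c := by
      have h := key_factor (x := y + l) (c := c) (by positivity) hc
      calc (y - c + l) * ((y + l) + 1) ^ c = ((y+l) - c) * ((y+l)+1)^c := by ring_nf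
        _ ≤ (y + l) * (y + l) ^ c := h
    calc (∏ i ∈ range l, (y - c + i)) * (y - c + l) * (y + ↑(l+1)) ^ c
        = (∏ i ∈ range l, (y - c + i)) * ((y - c + l) * ((y + l) + 1) ^ c) := by
          push_cast
          rw [mul_assoc, show y + ((l:ℝ)+1) = y + ↑l + 1 from by ring]
      _ ≤ (∏ i ∈ range l, (y - c + i)) * ((y + l) * (y + l) ^ c) :=
          mul_le_mul_of_nonneg_left hkey hfac
      _ = ((∏ i ∈ range l, (y - c + i)) * (y + l) ^ c) * (y + l) := by ring
      _ ≤ (y ^ c * ∏ i ∈ range l, (y + i)) * (y + l) :=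
          mul_le_mul_of_nonneg_right ih (by positivity)
      _ = y ^ c * ((∏ i ∈ range l, (y + i)) * (y + l)) := by ring

lemma pow_self_le (k : ℕ) : (k:ℝ)^k ≤ Real.exp k * k.factorial := by
  have h := Real.pow_div_factorial_le_exp (x := (k:ℝ)) (Nat.cast_nonneg k) k
  rw [div_le_iff₀ (by positivity)] at h
  linarith

lemma lemA (σ : ℝ) (hσ : 1 ≤ σ) (b : ℝ) (hb : 2 ≤ b) (k l : ℕ) :
    (((l+k).factorial : ℝ) / (l.factorial : ℝ)) ^ (σ-1)
      * ((∏ i ∈ range k, (b + i)) * ∏ i ∈ range l, (b + k + i))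
    ≤ Real.exp (k * σ) * (∏ h ∈ Icc 1 k, (b + h * σ) ^ σ) * ∏ i ∈ range l, (b + k * σ + i) := by
  have hσ1 : (0:ℝ) ≤ σ - 1 := by linarith
  have hb0 : (0:ℝ) < b := by linarith
  have hkσ : (k:ℝ) ≤ k * σ := by nlinarith [Nat.cast_nonneg (α := ℝ) k]
  set y : ℝ := b + k * σ with hy_def
  set c : ℝ := k * (σ - 1) with hc_def
  have hc : 0 ≤ c := mul_nonneg (Nat.cast_nonneg k) hσ1
  have hy0 : 0 < y := by positivity
  set M : ℝ := y + l with hM_def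
  have hM : 0 < M := by positivity
  have hycbk : y - c = b + k := by rw [hy_def, hc_def]; ring
  -- S1
  have hratio : (((l+k).factorial : ℝ) / (l.factorial : ℝ)) = ∏ j ∈ range k, ((l:ℝ)+1+j) := by
    rw [← fact_mul_prod l k]
    field_simp
  have hS1 : (((l+k).factorial : ℝ) / (l.factorial : ℝ)) ^ (σ-1) ≤ M ^ c := by
    rw [hratio]
    have h1 : ∏ j ∈ range k, ((l:ℝ)+1+j) ≤ M ^ k := by
      calc ∏ j ∈ range k, ((l:ℝ)+1+j) ≤ ∏ _j ∈ range k, M := by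
            apply Finset.prod_le_prod (fun j _ => by positivity)
            intro j hj
            have hj1 : (j:ℝ) + 1 ≤ k := by
              exact_mod_cast Nat.succ_le_of_lt (Finset.mem_range.1 hj)
            have h2 : (l:ℝ) + k ≤ M := by rw [hM_def, hy_def]; linarith
            linarith
        _ = M ^ k := by rw [Finset.prod_const, Finset.card_range]
    calc (∏ j ∈ range k, ((l:ℝ)+1+j)) ^ (σ-1) ≤ (M ^ k) ^ (σ-1) :=
          Real.rpow_le_rpow (Finset.prod_nonneg fun j _ => by positivity) h1 hσ1
      _ = M ^ c := by
          rw [← Real.rpow_natCast M k, ← Real.rpow_mul hM.le]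
  -- S2
  have hS2 : (∏ i ∈ range l, (b + k + i)) * M ^ c ≤ y ^ c * ∏ i ∈ range l, (y + i) := by
    have ht := telescope hc (by rw [hycbk]; positivity) l
    rw [hycbk] at ht
    exact ht
  -- S3
  have hS3 : y ^ c ≤ Real.exp (k * (σ-1)) * ∏ h ∈ Icc 1 k, (b + h*σ) ^ (σ-1) := by
    have hterm : ∀ h ∈ Icc 1 k, y ^ (σ-1) ≤ ((k:ℝ)/h) ^ (σ-1) * (b + h*σ) ^ (σ-1) := by
      intro h hh
      obtain ⟨h1, h2⟩ := Finset.mem_Icc.1 hh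
      have hh0 : (0:ℝ) < h := by exact_mod_cast Nat.lt_of_lt_of_le Nat.zero_lt_one h1
      have hhk : (h:ℝ) ≤ k := by exact_mod_cast h2
      have hle : y ≤ (k:ℝ)/h * (b + h*σ) := by
        rw [div_mul_eq_mul_div, le_div_iff₀ hh0, hy_def]
        nlinarith
      calc y ^ (σ-1) ≤ ((k:ℝ)/h * (b + h*σ)) ^ (σ-1) :=
            Real.rpow_le_rpow hy0.le hle hσ1
        _ = ((k:ℝ)/h) ^ (σ-1) * (b + h*σ) ^ (σ-1) :=
            Real.mul_rpow (by positivity) (by positivity)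
    have hyc2 : y ^ c = ∏ _h ∈ Icc 1 k, y ^ (σ-1) := by
      rw [Finset.prod_const, Nat.card_Icc, Nat.add_sub_cancel,
        ← Real.rpow_natCast (y ^ (σ-1)) k, ← Real.rpow_mul hy0.le]
      rw [hc_def]; ring_nf
    calc y ^ c = ∏ _h ∈ Icc 1 k, y ^ (σ-1) := hyc2
      _ ≤ ∏ h ∈ Icc 1 k, (((k:ℝ)/h) ^ (σ-1) * (b + h*σ) ^ (σ-1)) :=
          Finset.prod_le_prod (fun h _ => by positivity) hterm
      _ = (∏ h ∈ Icc 1 k, ((k:ℝ)/h) ^ (σ-1)) * ∏ h ∈ Icc 1 k, (b + h*σ) ^ (σ-1) :=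
          Finset.prod_mul_distrib
      _ ≤ Real.exp (k * (σ-1)) * ∏ h ∈ Icc 1 k, (b + h*σ) ^ (σ-1) := by
          apply mul_le_mul_of_nonneg_right _
            (Finset.prod_nonneg fun h _ => Real.rpow_nonneg (by positivity) _)
          rw [Real.finset_prod_rpow _ _ (fun h _ => by positivity) _]
          have hprod : (∏ h ∈ Icc 1 k, ((k:ℝ)/h)) = (k:ℝ)^k / (k.factorial:ℝ) := by
            rw [Finset.prod_div_distrib, Finset.prod_const, Nat.card_Icc, Nat.add_sub_cancel]
            congr 1
            rw [← Nat.cast_prod, ← Finset.Ico_add_one_right_eq_Icc, Finset.prod_Ico_id_eq_factorial]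
          rw [hprod]
          calc ((k:ℝ)^k / (k.factorial:ℝ)) ^ (σ-1) ≤ (Real.exp k) ^ (σ-1) := by
                apply Real.rpow_le_rpow (by positivity) _ hσ1
                rw [div_le_iff₀ (by positivity)]
                exact pow_self_le k
            _ = Real.exp (k * (σ-1)) := (Real.exp_mul _ _).symm
  -- S4
  have hS4 : (∏ i ∈ range k, (b + i)) ≤ ∏ h ∈ Icc 1 k, (b + h*σ) := by
    rw [← Finset.Ico_add_one_right_eq_Icc, Finset.prod_Ico_eq_prod_range]
    simp only [Nat.add_sub_cancel]
    apply Finset.prod_le_prod (fun i _ => by positivity)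
    intro i _
    have h1 : (i:ℝ) ≤ ((1+i:ℕ):ℝ) * σ := by
      push_cast
      nlinarith [Nat.cast_nonneg (α := ℝ) i]
    linarith
  -- S5
  have hS5 : (∏ h ∈ Icc 1 k, (b + h*σ) ^ (σ-1)) * (∏ h ∈ Icc 1 k, (b + h*σ))
      = ∏ h ∈ Icc 1 k, (b + h*σ) ^ σ := by
    rw [← Finset.prod_mul_distrib]
    apply Finset.prod_congr rfl
    intro h _
    have hpos : (0:ℝ) < b + h*σ := by positivity
    calc (b+h*σ)^(σ-1) * (b+h*σ) = (b+h*σ)^(σ-1) * (b+h*σ)^(1:ℝ) := by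
          rw [Real.rpow_one]
      _ = (b+h*σ)^(σ-1+1) := (Real.rpow_add hpos _ _).symm
      _ = (b+h*σ)^σ := by norm_num
  -- assemble
  have hP1 : 0 ≤ ∏ i ∈ range k, (b + i) := Finset.prod_nonneg fun i _ => by positivity
  have hP2 : 0 ≤ ∏ i ∈ range l, (b + k + i) := Finset.prod_nonneg fun i _ => by positivity
  have hQ : 0 ≤ ∏ i ∈ range l, (y + i) := Finset.prod_nonneg fun i _ => by positivity
  have hE : 0 ≤ ∏ h ∈ Icc 1 k, (b+h*σ)^(σ-1) :=
    Finset.prod_nonneg fun h _ => Real.rpow_nonneg (by positivity) _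
  calc (((l+k).factorial : ℝ) / (l.factorial : ℝ)) ^ (σ-1)
        * ((∏ i ∈ range k, (b + i)) * ∏ i ∈ range l, (b + k + i))
      ≤ M ^ c * ((∏ i ∈ range k, (b + i)) * ∏ i ∈ range l, (b + k + i)) :=
        mul_le_mul_of_nonneg_right hS1 (mul_nonneg hP1 hP2)
    _ = (∏ i ∈ range k, (b + i)) * ((∏ i ∈ range l, (b + k + i)) * M ^ c) := by ring
    _ ≤ (∏ i ∈ range k, (b + i)) * (y ^ c * ∏ i ∈ range l, (y + i)) :=
        mul_le_mul_of_nonneg_left hS2 hP1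
    _ ≤ (∏ i ∈ range k, (b + i)) *
          ((Real.exp (k * (σ-1)) * ∏ h ∈ Icc 1 k, (b + h*σ) ^ (σ-1)) * ∏ i ∈ range l, (y + i)) :=
        mul_le_mul_of_nonneg_left (mul_le_mul_of_nonneg_right hS3 hQ) hP1
    _ = ((∏ i ∈ range k, (b + i)) *
          (Real.exp (k * (σ-1)) * ∏ h ∈ Icc 1 k, (b + h*σ) ^ (σ-1))) * ∏ i ∈ range l, (y + i) := by
        ring
    _ ≤ ((∏ h ∈ Icc 1 k, (b + h*σ)) *
          (Real.exp (k * (σ-1)) * ∏ h ∈ Icc 1 k, (b + h*σ) ^ (σ-1))) * ∏ i ∈ range l, (y + i) :=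
        mul_le_mul_of_nonneg_right
          (mul_le_mul_of_nonneg_right hS4 (mul_nonneg (Real.exp_nonneg _) hE)) hQ
    _ = Real.exp (k * (σ-1)) *
          ((∏ h ∈ Icc 1 k, (b + h*σ)^(σ-1)) * (∏ h ∈ Icc 1 k, (b + h*σ)))
          * ∏ i ∈ range l, (y + i) := by ring
    _ = Real.exp (k * (σ-1)) * (∏ h ∈ Icc 1 k, (b + h*σ)^σ) * ∏ i ∈ range l, (y + i) := by
        rw [hS5]
    _ ≤ Real.exp (k * σ) * (∏ h ∈ Icc 1 k, (b + h*σ)^σ) * ∏ i ∈ range l, (y + i) := by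
        apply mul_le_mul_of_nonneg_right (mul_le_mul_of_nonneg_right _
          (Finset.prod_nonneg fun h _ => Real.rpow_nonneg (by positivity) _)) hQ
        apply Real.exp_le_exp.2
        nlinarith [Nat.cast_nonneg (α := ℝ) k]

lemma coeff_dXR_iter (g : PowerSeries ℝ) : ∀ (n l : ℕ),
    PowerSeries.coeff l (dXR^[n] g)
      = (∏ j ∈ range n, ((l : ℝ) + 1 + j)) * PowerSeries.coeff (l + n) g
  | 0, l => by simp
  | (n+1), l => by
    rw [Function.iterate_succ_apply']
    have h0 : PowerSeries.coeff l (dXR (dXR^[n] g))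
        = ((l+1 : ℕ) : ℝ) * PowerSeries.coeff (l+1) (dXR^[n] g) := by
      simp [dXR]
    rw [h0, coeff_dXR_iter g n (l+1), prod_range_succ']
    rw [show l + 1 + n = l + (n+1) from by omega]
    rw [show (∏ j ∈ range n, ((l:ℝ) + 1 + ↑(j+1)))
        = ∏ j ∈ range n, (((l+1:ℕ):ℝ) + 1 + ↑j) from
      Finset.prod_congr rfl fun j _ => by push_cast; ring]
    push_cast
    ring

lemma master (m μ k : ℕ) (hμ1 : 1 ≤ μ) (hμm : μ ≤ m) (R : ℝ) (hR0 : 0 < R) (hR1 : R ≤ 1)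
    (σ : ℝ) (hσ : 1 ≤ σ) (g : PowerSeries ℝ) (hg : ∀ l, 0 ≤ PowerSeries.coeff l g)
    (C a : ℝ) (hC : 0 < C) (ha : 1 ≤ a)
    (h : lleR (BorR σ m g) (geomPow C R a)) :
    lleR (BorR σ (m - μ) (dXR^[k + μ] g))
      (geomPow ((∏ i ∈ Finset.range μ, (a + (i:ℝ))) *
          (Real.exp ((k:ℝ)*σ) * ∏ h ∈ Finset.Icc 1 k, (a + (μ:ℝ) + (h:ℝ)*σ) ^ σ) * C)
        R (a + (μ:ℝ) + (k:ℝ)*σ)) := by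
  intro l
  simp only [BorR, geomPow, coeff_mk]
  set b : ℝ := a + (μ:ℝ) with hb_def
  have hb : 2 ≤ b := by
    have : (1:ℝ) ≤ (μ:ℝ) := by exact_mod_cast hμ1
    rw [hb_def]; linarith
  have hσ1 : (0:ℝ) ≤ σ - 1 := by linarith
  set n : ℕ := l + (k + μ) with hn_def
  have hnm : n - m = l + k - (m - μ) := by omega
  -- abbreviations
  set P : ℝ := ∏ j ∈ range (k + μ), ((l:ℝ) + 1 + j) with hP_def
  have hP0 : 0 ≤ P := Finset.prod_nonneg fun j _ => by positivity
  set D1 : ℝ := ((l - (m - μ)).factorial : ℝ) ^ (σ - 1) with hD1_def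
  set D2 : ℝ := ((n - m).factorial : ℝ) ^ (σ - 1) with hD2_def
  have hD1 : 0 < D1 := Real.rpow_pos_of_pos (by exact_mod_cast Nat.factorial_pos _) _
  have hD2 : 0 < D2 := Real.rpow_pos_of_pos (by exact_mod_cast Nat.factorial_pos _) _
  have hcoeff : PowerSeries.coeff l (dXR^[k + μ] g) = P * PowerSeries.coeff n g := by
    rw [coeff_dXR_iter]
  rw [hcoeff]
  -- hypothesis at n
  have hn := h n
  simp only [BorR, geomPow, coeff_mk] at hn
  have hgn : 0 ≤ PowerSeries.coeff n g := hg n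
  -- Step 1 : LHS = (P * (D2 / D1)) * (coeff n g / D2)
  have hstep1 : P * PowerSeries.coeff n g / D1
      = (P * (D2 / D1)) * (PowerSeries.coeff n g / D2) := by
    field_simp
  rw [hstep1]
  -- Step 2: bound D2/D1
  have hfle : ((n - m).factorial : ℝ) / ((l - (m - μ)).factorial : ℝ)
      ≤ ((l + k).factorial : ℝ) / (l.factorial : ℝ) := by
    rw [div_le_div_iff₀ (by exact_mod_cast Nat.factorial_pos _)
      (by exact_mod_cast Nat.factorial_pos _)]
    rw [hnm]
    exact_mod_cast (fact_sub_le (m - μ) l k).trans_eq (Nat.mul_comm _ _)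
  have hD21 : D2 / D1 ≤ (((l + k).factorial : ℝ) / (l.factorial : ℝ)) ^ (σ - 1) := by
    rw [hD2_def, hD1_def, ← Real.div_rpow (Nat.cast_nonneg _) (Nat.cast_nonneg _)]
    exact Real.rpow_le_rpow (by positivity) hfle hσ1
  -- the geomPow-side quantities
  have hRpos : ∀ x : ℝ, 0 < R ^ x := fun x => Real.rpow_pos_of_pos hR0 x
  have hQn : (∏ i ∈ range n, (a + (i:ℝ)))
      = (∏ i ∈ range μ, (a + (i:ℝ))) *
        ((∏ i ∈ range k, (b + (i:ℝ))) * ∏ i ∈ range l, (b + (k:ℝ) + (i:ℝ))) := by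
    rw [show n = μ + (k + l) from by omega, Finset.prod_range_add, Finset.prod_range_add]
    congr 1
    · congr 1
      · exact Finset.prod_congr rfl fun i _ => by rw [hb_def]; push_cast; ring
      · exact Finset.prod_congr rfl fun i _ => by rw [hb_def]; push_cast; ring
  have hPn : P / (n.factorial : ℝ) = 1 / (l.factorial : ℝ) := by
    have := fact_mul_prod l (k + μ)
    rw [← hP_def] at this
    rw [hn_def, ← this]
    field_simp
    ring
    exact mul_inv_cancel₀ (by rw [hP_def]; exact (Finset.prod_pos fun j _ => by positivity).ne')
  have hPval : P = (n.factorial : ℝ) / (l.factorial : ℝ) := by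
    have h2 := fact_mul_prod l (k + μ)
    rw [← hP_def, ← hn_def] at h2
    rw [eq_div_iff (by exact_mod_cast (Nat.factorial_pos l).ne')]
    linarith
  have hT0 : 0 ≤ (((l+k).factorial : ℝ) / (l.factorial : ℝ)) ^ (σ-1) :=
    Real.rpow_nonneg (by positivity) _
  have hQn0 : 0 ≤ ∏ i ∈ range n, (a + (i:ℝ)) :=
    Finset.prod_nonneg fun i _ => by positivity
  have hPμ0 : 0 ≤ ∏ i ∈ range μ, (a + (i:ℝ)) :=
    Finset.prod_nonneg fun i _ => by positivity
  have hQ0 : 0 ≤ ∏ i ∈ range l, (b + (k:ℝ)*σ + (i:ℝ)) :=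
    Finset.prod_nonneg fun i _ => by positivity
  have hKQ0 : 0 ≤ Real.exp ((k:ℝ)*σ) * (∏ h ∈ Icc 1 k, (b + (h:ℝ)*σ)^σ) *
      ∏ i ∈ range l, (b + (k:ℝ)*σ + (i:ℝ)) :=
    mul_nonneg (mul_nonneg (Real.exp_nonneg _)
      (Finset.prod_nonneg fun i _ => Real.rpow_nonneg (by positivity) _)) hQ0
  have hexp : a + (n:ℝ) ≤ b + (k:ℝ)*σ + (l:ℝ) := by
    rw [hn_def, hb_def]
    push_cast
    nlinarith [Nat.cast_nonneg (α := ℝ) k]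
  have hRle : C / R ^ (a + (n:ℝ)) ≤ C / R ^ (b + (k:ℝ)*σ + (l:ℝ)) := by
    exact (div_le_div_iff_of_pos_left hC (hRpos _) (hRpos _)).2
      (Real.rpow_le_rpow_of_exponent_ge hR0 hR1 hexp)
  calc P * (D2 / D1) * (PowerSeries.coeff n g / D2)
      ≤ P * (D2 / D1) * (C / R ^ (a + (n:ℝ)) * ((∏ i ∈ range n, (a + (i:ℝ))) / (n.factorial:ℝ))) := by
        apply mul_le_mul_of_nonneg_left hn
          (mul_nonneg hP0 (le_of_lt (div_pos hD2 hD1)))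
    _ ≤ P * ((((l+k).factorial : ℝ) / (l.factorial : ℝ)) ^ (σ-1)) *
          (C / R ^ (a + (n:ℝ)) * ((∏ i ∈ range n, (a + (i:ℝ))) / (n.factorial:ℝ))) := by
        apply mul_le_mul_of_nonneg_right (mul_le_mul_of_nonneg_left hD21 hP0)
        exact mul_nonneg (le_of_lt (div_pos hC (hRpos _))) (by positivity)
    _ = (C / R ^ (a + (n:ℝ))) * ((1 / (l.factorial:ℝ)) * ((∏ i ∈ range μ, (a + (i:ℝ))) *
          ((((l+k).factorial : ℝ) / (l.factorial : ℝ)) ^ (σ-1) *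
            ((∏ i ∈ range k, (b + (i:ℝ))) * ∏ i ∈ range l, (b + (k:ℝ) + (i:ℝ)))))) := by
        rw [hQn, hPval]
        field_simp
    _ ≤ (C / R ^ (a + (n:ℝ))) * ((1 / (l.factorial:ℝ)) * ((∏ i ∈ range μ, (a + (i:ℝ))) *
          (Real.exp ((k:ℝ)*σ) * (∏ h ∈ Icc 1 k, (b + (h:ℝ)*σ)^σ) *
            ∏ i ∈ range l, (b + (k:ℝ)*σ + (i:ℝ))))) := by
        apply mul_le_mul_of_nonneg_left _ (le_of_lt (div_pos hC (hRpos _)))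
        apply mul_le_mul_of_nonneg_left _ (by positivity)
        exact mul_le_mul_of_nonneg_left (lemA σ hσ b hb k l) hPμ0
    _ ≤ (C / R ^ (b + (k:ℝ)*σ + (l:ℝ))) * ((1 / (l.factorial:ℝ)) * ((∏ i ∈ range μ, (a + (i:ℝ))) *
          (Real.exp ((k:ℝ)*σ) * (∏ h ∈ Icc 1 k, (b + (h:ℝ)*σ)^σ) *
            ∏ i ∈ range l, (b + (k:ℝ)*σ + (i:ℝ))))) := by
        apply mul_le_mul_of_nonneg_right hRle
        exact mul_nonneg (by positivity) (mul_nonneg hPμ0 hKQ0)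
    _ = (∏ i ∈ range μ, (a + (i:ℝ))) *
          (Real.exp ((k:ℝ)*σ) * ∏ h ∈ Icc 1 k, (b + (h:ℝ)*σ)^σ) * C / R ^ (b + (k:ℝ)*σ + (l:ℝ)) *
          ((∏ i ∈ range l, (b + (k:ℝ)*σ + (i:ℝ))) / (l.factorial:ℝ)) := by
        ring

/-- **Corollary 3.4** (Lastra–Tahara). Let `m ∈ ℕ*`, `0 < R ≤ 1`, `σ ≥ 1`, and suppose
`f ∈ ℂ[[x]]` satisfies `B_σ^{(m)}[|f|](x) ≪ C/(R−x)^a` for some `C > 0`, `a ≥ 1`. Then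
for every `1 ≤ μ ≤ m` and every `k ≥ 1`:
`B_σ^{(m−μ)}[∂ₓ^μ|f|] ≪ a(a+1)⋯(a+μ−1) C/(R−x)^{a+μ}` and
`B_σ^{(m−μ)}[∂ₓ^{k+μ}|f|] ≪ a(a+1)⋯(a+μ−1) A_{μ,k} C/(R−x)^{a+μ+kσ}`,
where `A_{μ,k} = e^{kσ} ∏_{h=1}^{k} (a+μ+hσ)^σ`. -/
theorem borel_iterated_derivative_estimates (m : ℕ) (hm : 1 ≤ m)
    (R : ℝ) (hR0 : 0 < R) (hR1 : R ≤ 1)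
    (σ : ℝ) (hσ : 1 ≤ σ) (f : PowerSeries ℂ) (C a : ℝ) (hC : 0 < C) (ha : 1 ≤ a)
    (h : lleR (BorR σ m (absS f)) (geomPow C R a)) :
    ∀ μ : ℕ, 1 ≤ μ → μ ≤ m →
      (lleR (BorR σ (m - μ) (dXR^[μ] (absS f)))
          (geomPow ((∏ i ∈ Finset.range μ, (a + (i : ℝ))) * C) R (a + (μ : ℝ)))) ∧
      (∀ k : ℕ, 1 ≤ k →
        lleR (BorR σ (m - μ) (dXR^[k + μ] (absS f)))
          (geomPow ((∏ i ∈ Finset.range μ, (a + (i : ℝ))) *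
              (Real.exp ((k : ℝ) * σ) *
                ∏ h ∈ Finset.Icc 1 k, (a + (μ : ℝ) + (h : ℝ) * σ) ^ σ) * C)
            R (a + (μ : ℝ) + (k : ℝ) * σ))) := by
  intro μ hμ1 hμm
  have hg : ∀ l, 0 ≤ PowerSeries.coeff l (absS f) := fun l => by
    simp [absS]
  constructor
  · have H := master m μ 0 hμ1 hμm R hR0 hR1 σ hσ (absS f) hg C a hC ha h
    simp only [show Finset.Icc 1 0 = (∅ : Finset ℕ) from Finset.Icc_eq_empty (by omega),
      Finset.prod_empty, Nat.cast_zero, zero_mul, Real.exp_zero, mul_one, one_mul,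
      add_zero, zero_add] at H
    exact H
  · intro k _
    exact master m μ k hμ1 hμm R hR0 hR1 σ hσ (absS f) hg C a hC ha h
end
end

section
/- Let (j,α) ∈ I_m. Then: (i) if (j,α) ∈ N₀, then k^j l^α ≤ φ(k,l) for every (k,l) ∈ ℕ*×ℕ; (ii) if (j,α) ∉ N₀, then for every integer p ≥ 1 and every real σ ≥ 1 + d_{j,α}/p one has k^j (l−p)^α / φ(k,l) ≤ (l!/(l−p)!)^{σ−1} for every (k,l) ∈ ℕ*×ℕ with l ≥ p, where d_{j,α} = min{y ∈ ℝ : (j, α−y) ∈ N₀}. -/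
open Finset

noncomputable section

/-- The Newton polygon `N₀` attached to a finite set `Λ₀` of lattice points: the convex
hull of the union of the quadrants `C(j,α) = {(x,y) : x ≤ j, y ≤ α}`, `(j,α) ∈ Λ₀`. -/
def NPa (Λ₀ : Finset (ℕ × ℕ)) : Set (ℝ × ℝ) :=
  convexHull ℝ (⋃ p ∈ Λ₀, {q : ℝ × ℝ | q.1 ≤ (p.1 : ℝ) ∧ q.2 ≤ (p.2 : ℝ)})

/-- `φ(λ,ρ) = Σ_{i=1}^p λ^{m_i} ρ^{n_i}`, the sum over the vertices `(m_i,n_i)` of the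
Newton polygon (its extreme points), evaluated at `(k,l)`. -/
def phiA (Λ₀ : Finset (ℕ × ℕ)) (k l : ℕ) : ℝ :=
  ∑ᶠ v ∈ Set.extremePoints ℝ (NPa Λ₀), (k : ℝ) ^ v.1 * (l : ℝ) ^ v.2

/-- `d_{j,α} = min {y ∈ ℝ : (j, α−y) ∈ N₀}`. -/
def dNPa (Λ₀ : Finset (ℕ × ℕ)) (p : ℕ × ℕ) : ℝ :=
  sInf {y : ℝ | (((p.1 : ℝ), (p.2 : ℝ) - y) : ℝ × ℝ) ∈ NPa Λ₀}

namespace NewtonAux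
variable (Λ₀ : Finset (ℕ × ℕ))

def Sr : Set (ℝ × ℝ) := (fun p : ℕ × ℕ => ((p.1 : ℝ), (p.2 : ℝ))) '' ↑Λ₀

def Pol : Set (ℝ × ℝ) := convexHull ℝ (Sr Λ₀)

lemma Sr_finite : (Sr Λ₀).Finite := (Λ₀.finite_toSet).image _

lemma Pol_compact : IsCompact (Pol Λ₀) := (Sr_finite Λ₀).isCompact_convexHull (𝕜 := ℝ)

lemma Pol_subset_npa : Pol Λ₀ ⊆ NPa Λ₀ := by
  apply convexHull_mono
  rintro v ⟨p, hp, rfl⟩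
  exact Set.mem_biUnion hp ⟨le_refl _, le_refl _⟩

lemma npa_eq : NPa Λ₀ = {q : ℝ × ℝ | ∃ c ∈ Pol Λ₀, q.1 ≤ c.1 ∧ q.2 ≤ c.2} := by
  apply le_antisymm
  · apply convexHull_min
    · rintro q hq
      simp only [Set.mem_iUnion] at hq
      obtain ⟨p, hp, h1, h2⟩ := hq
      exact ⟨((p.1 : ℝ), (p.2 : ℝ)), subset_convexHull ℝ _ ⟨p, hp, rfl⟩, h1, h2⟩
    · rintro q ⟨c, hc, h1, h2⟩ q' ⟨c', hc', h1', h2'⟩ a b ha hb hab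
      refine ⟨a • c + b • c', (convex_convexHull ℝ _) hc hc' ha hb hab, ?_, ?_⟩
      · simp only [Prod.fst_add, Prod.smul_fst, smul_eq_mul]
        exact add_le_add (mul_le_mul_of_nonneg_left h1 ha) (mul_le_mul_of_nonneg_left h1' hb)
      · simp only [Prod.snd_add, Prod.smul_snd, smul_eq_mul]
        exact add_le_add (mul_le_mul_of_nonneg_left h2 ha) (mul_le_mul_of_nonneg_left h2' hb)
  · rintro q ⟨c, hc, h1, h2⟩
    have key : Pol Λ₀ ⊆ {c : ℝ × ℝ | ∀ q : ℝ × ℝ, q.1 ≤ c.1 → q.2 ≤ c.2 → q ∈ NPa Λ₀} := by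
      apply convexHull_min
      · rintro v ⟨p, hp, rfl⟩ q hq1 hq2
        exact subset_convexHull ℝ _ (Set.mem_biUnion hp ⟨hq1, hq2⟩)
      · rintro c hcP c' hc'P a b ha hb hab q hq1 hq2
        set d : ℝ × ℝ := (a • c + b • c') - q with hd
        have hd1 : 0 ≤ d.1 := by
          simp only [hd, Prod.fst_sub, Prod.fst_add, Prod.smul_fst, smul_eq_mul] at *
          linarith
        have hd2 : 0 ≤ d.2 := by
          simp only [hd, Prod.snd_sub, Prod.snd_add, Prod.smul_snd, smul_eq_mul] at *
          linarith
        have m1 : (c - d) ∈ NPa Λ₀ :=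
          hcP _ (by simpa using sub_le_self c.1 hd1) (by simpa using sub_le_self c.2 hd2)
        have m2 : (c' - d) ∈ NPa Λ₀ :=
          hc'P _ (by simpa using sub_le_self c'.1 hd1) (by simpa using sub_le_self c'.2 hd2)
        have hq : q = a • (c - d) + b • (c' - d) := by
          apply Prod.ext <;>
            simp only [hd, Prod.fst_add, Prod.snd_add, Prod.smul_fst, Prod.smul_snd,
              Prod.fst_sub, Prod.snd_sub, smul_eq_mul]
          · linear_combination (a * c.1 + b * c'.1 - q.1) * hab
          · linear_combination (a * c.2 + b * c'.2 - q.2) * hab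
        rw [hq]
        exact (convex_convexHull ℝ _) m1 m2 ha hb hab
    exact key hc q h1 h2

variable {Λ₀}

lemma mem_npa_of_le {q c : ℝ × ℝ} (hc : c ∈ NPa Λ₀) (h1 : q.1 ≤ c.1) (h2 : q.2 ≤ c.2) :
    q ∈ NPa Λ₀ := by
  rw [npa_eq] at hc ⊢
  obtain ⟨c', hc', e1, e2⟩ := hc
  exact ⟨c', hc', h1.trans e1, h2.trans e2⟩

lemma extreme_subset : Set.extremePoints ℝ (NPa Λ₀) ⊆ Sr Λ₀ := by
  intro v hv
  rw [mem_extremePoints] at hv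
  obtain ⟨hvN, hext⟩ := hv
  have hvN' := hvN
  rw [npa_eq] at hvN'
  obtain ⟨c, hcP, e1, e2⟩ := hvN'
  have hx2 : (v - (c - v)) ∈ NPa Λ₀ := by
    refine mem_npa_of_le hvN ?_ ?_ <;> simp [sub_le_iff_le_add] <;> linarith
  have hseg : v ∈ openSegment ℝ c (v - (c - v)) := by
    refine ⟨1/2, 1/2, by norm_num, by norm_num, by norm_num, ?_⟩
    apply Prod.ext <;>
      simp only [Prod.fst_add, Prod.snd_add, Prod.smul_fst, Prod.smul_snd, Prod.fst_sub,
        Prod.snd_sub, smul_eq_mul] <;> ring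
  have hcv : c = v := (hext c (Pol_subset_npa Λ₀ hcP) _ hx2 hseg).1
  have hvP : v ∈ Pol Λ₀ := hcv ▸ hcP
  have : v ∈ Set.extremePoints ℝ (Pol Λ₀) := by
    rw [mem_extremePoints]
    exact ⟨hvP, fun x₁ h₁ x₂ h₂ hs => hext x₁ (Pol_subset_npa Λ₀ h₁) x₂ (Pol_subset_npa Λ₀ h₂) hs⟩
  exact extremePoints_convexHull_subset this

private lemma avg_eq {a b x y M : ℝ} (ha : 0 < a) (hb : 0 < b) (hab : a + b = 1)
    (hx : x ≤ M) (hy : y ≤ M) (h : a * x + b * y = M) : x = M ∧ y = M := by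
  have hM : a * M + b * M = M := by linear_combination M * hab
  have hax : a * x ≤ a * M := mul_le_mul_of_nonneg_left hx ha.le
  have hbx : b * y ≤ b * M := mul_le_mul_of_nonneg_left hy hb.le
  have e1 : a * x = a * M := by linarith
  have e2 : b * y = b * M := by linarith
  exact ⟨mul_left_cancel₀ ha.ne' e1, mul_left_cancel₀ hb.ne' e2⟩

lemma exists_extreme_max (hne : Λ₀.Nonempty) {l1 l2 : ℝ} (h1 : 0 ≤ l1) (h2 : 0 ≤ l2) :
    ∃ v ∈ Set.extremePoints ℝ (NPa Λ₀),
      ∀ q ∈ NPa Λ₀, l1 * q.1 + l2 * q.2 ≤ l1 * v.1 + l2 * v.2 := by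
  classical
  obtain ⟨p₀, hp₀⟩ := hne
  have hPne : (Pol Λ₀).Nonempty :=
    ⟨_, subset_convexHull ℝ _ ⟨p₀, hp₀, rfl⟩⟩
  have hPc := Pol_compact Λ₀
  set f : ℝ × ℝ → ℝ := fun q => l1 * q.1 + l2 * q.2 with hf
  have hfc : Continuous f := by fun_prop
  obtain ⟨w1, hw1, hmax1⟩ := hPc.exists_isMaxOn hPne hfc.continuousOn
  rw [isMaxOn_iff] at hmax1
  set F1 : Set (ℝ × ℝ) := Pol Λ₀ ∩ {q | f q = f w1} with hF1
  have hF1c : IsCompact F1 := hPc.inter_right (isClosed_eq hfc continuous_const)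
  have hF1ne : F1.Nonempty := ⟨w1, hw1, rfl⟩
  set μ : ℝ × ℝ → ℝ := fun q => q.1 + q.2 with hμ
  have hμc : Continuous μ := by fun_prop
  obtain ⟨w2, hw2, hmax2⟩ := hF1c.exists_isMaxOn hF1ne hμc.continuousOn
  rw [isMaxOn_iff] at hmax2
  set F2 : Set (ℝ × ℝ) := F1 ∩ {q | μ q = μ w2} with hF2
  have hF2c : IsCompact F2 := hF1c.inter_right (isClosed_eq hμc continuous_const)
  have hF2ne : F2.Nonempty := ⟨w2, hw2, rfl⟩
  obtain ⟨w, hw, hmax3⟩ := hF2c.exists_isMaxOn hF2ne continuous_fst.continuousOn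
  rw [isMaxOn_iff] at hmax3
  have hwF1 : w ∈ F1 := hw.1
  have hwP : w ∈ Pol Λ₀ := hwF1.1
  have hwf : f w = f w1 := hwF1.2
  have hwμ : μ w = μ w2 := hw.2
  have hwN : w ∈ NPa Λ₀ := Pol_subset_npa Λ₀ hwP
  -- the max property over NPa
  have hmaxN : ∀ q ∈ NPa Λ₀, f q ≤ f w := by
    intro q hq
    rw [npa_eq] at hq
    obtain ⟨c, hcP, e1, e2⟩ := hq
    have : f q ≤ f c :=
      add_le_add (mul_le_mul_of_nonneg_left e1 h1) (mul_le_mul_of_nonneg_left e2 h2)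
    exact this.trans (hwf ▸ hmax1 c hcP)
  have hmaxμF1 : ∀ q ∈ F1, μ q ≤ μ w := fun q hq => hwμ ▸ hmax2 q hq
  -- extremeness of w
  refine ⟨w, ?_, fun q hq => hmaxN q hq⟩
  rw [mem_extremePoints]
  refine ⟨hwN, fun x₁ hx₁ x₂ hx₂ hseg => ?_⟩
  obtain ⟨a, b, ha, hb, hab, hsum⟩ := hseg
  have hc1 : a * x₁.1 + b * x₂.1 = w.1 := by rw [← hsum]; simp
  have hc2 : a * x₁.2 + b * x₂.2 = w.2 := by rw [← hsum]; simp
  -- step 1 : f equalities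
  have hfx₁ : f x₁ = f w ∧ f x₂ = f w := by
    refine avg_eq ha hb hab (hmaxN _ hx₁) (hmaxN _ hx₂) ?_
    simp only [hf]
    linear_combination l1 * hc1 + l2 * hc2
  -- componentwise dominating points
  have key : ∀ x : ℝ × ℝ, x ∈ NPa Λ₀ → f x = f w → μ x ≤ μ w := by
    intro x hx hfx
    rw [npa_eq] at hx
    obtain ⟨c, hcP, e1, e2⟩ := hx
    have hfxc : f x ≤ f c :=
      add_le_add (mul_le_mul_of_nonneg_left e1 h1) (mul_le_mul_of_nonneg_left e2 h2)
    have hfcw : f c ≤ f w := hwf ▸ hmax1 c hcP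
    have hfceq : f c = f w := le_antisymm hfcw (by rw [← hfx]; exact hfxc)
    have hcF1 : c ∈ F1 := ⟨hcP, show f c = f w1 by rw [hfceq, hwf]⟩
    have : μ x ≤ μ c := add_le_add e1 e2
    exact this.trans (hmaxμF1 c hcF1)
  have hμx₁ : μ x₁ = μ w ∧ μ x₂ = μ w := by
    refine avg_eq ha hb hab (key _ hx₁ hfx₁.1) (key _ hx₂ hfx₁.2) ?_
    simp only [hμ]
    linear_combination hc1 + hc2
  -- x₁ x₂ ∈ F2
  have memF2 : ∀ x : ℝ × ℝ, x ∈ NPa Λ₀ → f x = f w → μ x = μ w → x ∈ F2 := by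
    intro x hx hfx hμx
    have hx' := hx
    rw [npa_eq] at hx'
    obtain ⟨c, hcP, e1, e2⟩ := hx'
    have hfxc : f x ≤ f c :=
      add_le_add (mul_le_mul_of_nonneg_left e1 h1) (mul_le_mul_of_nonneg_left e2 h2)
    have hfcw : f c ≤ f w := hwf ▸ hmax1 c hcP
    have hfceq : f c = f w := le_antisymm hfcw (by rw [← hfx]; exact hfxc)
    have hcF1 : c ∈ F1 := ⟨hcP, show f c = f w1 by rw [hfceq, hwf]⟩
    have hμc : μ c ≤ μ w := hmaxμF1 c hcF1
    have hμxc : μ x ≤ μ c := add_le_add e1 e2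
    have hμceq : μ c = μ x := le_antisymm (by rw [hμx]; exact hμc) hμxc
    have hxc : x = c := by
      apply Prod.ext
      · by_contra hne1
        have : x.1 < c.1 := lt_of_le_of_ne e1 hne1
        have : μ x < μ c := by simp only [hμ]; linarith
        linarith [hμceq]
      · by_contra hne2
        have : x.2 < c.2 := lt_of_le_of_ne e2 hne2
        have : μ x < μ c := by simp only [hμ]; linarith
        linarith [hμceq]
    rw [hxc]
    exact ⟨hcF1, show μ c = μ w2 by rw [← hwμ, hμceq]; exact hμx⟩
  have hx₁F2 : x₁ ∈ F2 := memF2 _ hx₁ hfx₁.1 hμx₁.1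
  have hx₂F2 : x₂ ∈ F2 := memF2 _ hx₂ hfx₁.2 hμx₁.2
  have hg : x₁.1 = w.1 ∧ x₂.1 = w.1 :=
    avg_eq ha hb hab (hmax3 _ hx₁F2) (hmax3 _ hx₂F2) hc1
  constructor
  · apply Prod.ext hg.1
    have := hμx₁.1
    simp only [hμ] at this
    linarith [hg.1]
  · apply Prod.ext hg.2
    have := hμx₁.2
    simp only [hμ] at this
    linarith [hg.2]
end NewtonAux

namespace NewtonAux
open scoped Classical

variable {Λ₀ : Finset (ℕ × ℕ)}

/-- The extreme points as a finset. -/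
noncomputable def EF (Λ₀ : Finset (ℕ × ℕ)) : Finset (ℝ × ℝ) :=
  (Λ₀.image fun p : ℕ × ℕ => ((p.1 : ℝ), (p.2 : ℝ))).filter
    (fun v => v ∈ Set.extremePoints ℝ (NPa Λ₀))

lemma coe_EF (Λ₀ : Finset (ℕ × ℕ)) :
    Set.extremePoints ℝ (NPa Λ₀) = ↑(EF Λ₀) := by
  ext v
  simp only [EF, Finset.coe_filter, Set.mem_setOf_eq, Finset.mem_image]
  constructor
  · intro hv
    obtain ⟨p, hp, rfl⟩ := extreme_subset hv
    exact ⟨⟨p, hp, rfl⟩, hv⟩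
  · exact fun h => h.2

lemma phiA_eq (Λ₀ : Finset (ℕ × ℕ)) (k l : ℕ) :
    phiA Λ₀ k l = ∑ v ∈ EF Λ₀, (k : ℝ) ^ v.1 * (l : ℝ) ^ v.2 := by
  rw [phiA, coe_EF, finsum_mem_coe_finset]

lemma EF_nonneg {v : ℝ × ℝ} (hv : v ∈ EF Λ₀) : 0 ≤ v.1 ∧ 0 ≤ v.2 := by
  obtain ⟨p, _, rfl⟩ := Finset.mem_image.1 (Finset.mem_filter.1 hv).1
  exact ⟨Nat.cast_nonneg _, Nat.cast_nonneg _⟩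

lemma mem_EF_of_extreme {v : ℝ × ℝ} (hv : v ∈ Set.extremePoints ℝ (NPa Λ₀)) :
    v ∈ EF Λ₀ := by
  rw [← Finset.mem_coe, ← coe_EF]; exact hv

/-- The fundamental estimate: a monomial at a point of the Newton polygon is dominated
by the sum of the vertex monomials. -/
lemma pow_le_sum_EF (hne : Λ₀.Nonempty) {x y : ℝ} (hxy : ((x, y) : ℝ × ℝ) ∈ NPa Λ₀)
    {k l : ℝ} (hk : 1 ≤ k) (hl : 1 ≤ l) :
    k ^ x * l ^ y ≤ ∑ v ∈ EF Λ₀, k ^ v.1 * l ^ v.2 := by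
  obtain ⟨v, hv, hmax⟩ := exists_extreme_max hne (Real.log_nonneg hk) (Real.log_nonneg hl)
  have h := hmax _ hxy
  have hk0 : (0 : ℝ) < k := lt_of_lt_of_le one_pos hk
  have hl0 : (0 : ℝ) < l := lt_of_lt_of_le one_pos hl
  have hterm : k ^ x * l ^ y ≤ k ^ v.1 * l ^ v.2 := by
    rw [Real.rpow_def_of_pos hk0, Real.rpow_def_of_pos hl0, Real.rpow_def_of_pos hk0,
      Real.rpow_def_of_pos hl0, ← Real.exp_add, ← Real.exp_add, Real.exp_le_exp]
    simpa using h
  refine hterm.trans (Finset.single_le_sum (f := fun v : ℝ × ℝ => k ^ v.1 * l ^ v.2)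
    (fun i _ => by positivity) (mem_EF_of_extreme hv))

lemma m0_mem_extreme {m : ℕ} (hmem : (m, 0) ∈ Λ₀) (hsub : Λ₀ ⊆ insert (m, 0) (ImF m)) :
    (((m : ℝ), (0 : ℝ)) : ℝ × ℝ) ∈ Set.extremePoints ℝ (NPa Λ₀) := by
  obtain ⟨v, hv, hmax⟩ :=
    exists_extreme_max (Λ₀ := Λ₀) ⟨_, hmem⟩ (l1 := 1) (l2 := 0) zero_le_one le_rfl
  have hm0N : (((m : ℝ), (0 : ℝ)) : ℝ × ℝ) ∈ NPa Λ₀ :=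
    Pol_subset_npa Λ₀ (subset_convexHull ℝ _ ⟨(m, 0), hmem, by norm_num⟩)
  have h := hmax _ hm0N
  simp only [one_mul, zero_mul, add_zero] at h
  obtain ⟨p, hp, rfl⟩ := extreme_subset hv
  have hpm : m ≤ p.1 := by
    have h' : (m : ℝ) ≤ (p.1 : ℝ) := h
    exact_mod_cast h'
  have hpeq : p = (m, 0) := by
    rcases Finset.mem_insert.1 (hsub hp) with h' | h'
    · exact h'
    · exfalso
      have := (Finset.mem_filter.1 h').2.2
      omega
  rw [hpeq] at hv
  simpa using hv

lemma fact_aux (q p : ℕ) : q ^ p * q.factorial ≤ (q + p).factorial := by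
  induction p with
  | zero => simp
  | succ p ih =>
      have h1 : q ^ (p + 1) * q.factorial = q * (q ^ p * q.factorial) := by ring
      rw [h1]
      calc q * (q ^ p * q.factorial) ≤ q * (q + p).factorial := Nat.mul_le_mul_left _ ih
        _ ≤ (q + p + 1) * (q + p).factorial := Nat.mul_le_mul_right _ (by omega)
        _ = (q + p + 1).factorial := (Nat.factorial_succ _).symm

lemma dn_spec {m : ℕ} (j α : ℕ) (hmem : (m, 0) ∈ Λ₀) (hjm : j ≤ m) :
    ∃ c ∈ Pol Λ₀, (j : ℝ) ≤ c.1 ∧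
      {y : ℝ | (((j : ℝ), (α : ℝ) - y) : ℝ × ℝ) ∈ NPa Λ₀} = Set.Ici ((α : ℝ) - c.2) := by
  set T : Set (ℝ × ℝ) := Pol Λ₀ ∩ {q | (j : ℝ) ≤ q.1} with hT
  have hTc : IsCompact T :=
    (Pol_compact Λ₀).inter_right (isClosed_le continuous_const continuous_fst)
  have hTne : T.Nonempty :=
    ⟨((m : ℝ), (0 : ℝ)), subset_convexHull ℝ _ ⟨(m, 0), hmem, by norm_num⟩,
      by simpa using (Nat.cast_le.2 hjm : (j : ℝ) ≤ (m : ℝ))⟩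
  obtain ⟨c, hcT, hmaxc⟩ := hTc.exists_isMaxOn hTne continuous_snd.continuousOn
  rw [isMaxOn_iff] at hmaxc
  refine ⟨c, hcT.1, hcT.2, ?_⟩
  ext y
  simp only [Set.mem_setOf_eq, Set.mem_Ici]
  constructor
  · intro hy
    rw [npa_eq] at hy
    obtain ⟨c', hc', e1, e2⟩ := hy
    have hc'T : c' ∈ T := ⟨hc', e1⟩
    have := hmaxc _ hc'T
    simp only at e2 this ⊢
    linarith
  · intro hy
    rw [npa_eq]
    exact ⟨c, hcT.1, hcT.2, by simpa using (by linarith : (α : ℝ) - y ≤ c.2)⟩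

end NewtonAux

open NewtonAux in
/-- **Proposition 3.5** (Lastra–Tahara). Let `(j,α) ∈ I_m`. Then
(i) if `(j,α) ∈ N₀`, `k^j l^α ≤ φ(k,l)` for every `(k,l) ∈ ℕ* × ℕ`;
(ii) if `(j,α) ∉ N₀`, then for every `p ≥ 1` and `σ ≥ 1 + d_{j,α}/p`,
`k^j (l−p)^α / φ(k,l) ≤ (l!/(l−p)!)^{σ−1}` for every `(k,l) ∈ ℕ* × ℕ` with `l ≥ p`. -/
theorem newton_polygon_phi_estimates (m : ℕ) (hm : 1 ≤ m)
    (Λ₀ : Finset (ℕ × ℕ)) (hmem : (m, 0) ∈ Λ₀) (hsub : Λ₀ ⊆ insert (m, 0) (ImF m))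
    (j α : ℕ) (hjα : (j, α) ∈ ImF m) :
    ((((j : ℝ), (α : ℝ)) : ℝ × ℝ) ∈ NPa Λ₀ →
      ∀ k l : ℕ, 1 ≤ k → (k : ℝ) ^ j * (l : ℝ) ^ α ≤ phiA Λ₀ k l) ∧
    ((((j : ℝ), (α : ℝ)) : ℝ × ℝ) ∉ NPa Λ₀ →
      ∀ p : ℕ, 1 ≤ p → ∀ σ : ℝ, 1 + dNPa Λ₀ (j, α) / (p : ℝ) ≤ σ →
        ∀ k l : ℕ, 1 ≤ k → p ≤ l →
          (k : ℝ) ^ j * ((l - p : ℕ) : ℝ) ^ α / phiA Λ₀ k l ≤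
            ((l.factorial : ℝ) / ((l - p).factorial : ℝ)) ^ (σ - 1)) := by
  have hne : Λ₀.Nonempty := ⟨_, hmem⟩
  have hjm : j < m := (Finset.mem_filter.1 hjα).2.2
  have hjαm : j + α ≤ m := (Finset.mem_filter.1 hjα).2.1
  constructor
  · -- part (i)
    intro hN k l hk
    have hk1 : (1 : ℝ) ≤ (k : ℝ) := by exact_mod_cast hk
    rw [phiA_eq]
    rcases Nat.eq_zero_or_pos l with rfl | hl
    · rcases Nat.eq_zero_or_pos α with rfl | hα
      · -- l = 0, α = 0 : use the vertex (m,0)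
        have hterm : ((k : ℝ) ^ ((m : ℝ)) * ((0 : ℕ) : ℝ) ^ ((0 : ℝ)) : ℝ) =
            (k : ℝ) ^ (m : ℝ) := by
          norm_num
        have hmem' : (((m : ℝ), (0 : ℝ)) : ℝ × ℝ) ∈ EF Λ₀ :=
          mem_EF_of_extreme (m0_mem_extreme hmem hsub)
        have hle : (k : ℝ) ^ j * ((0 : ℕ) : ℝ) ^ (0 : ℕ) ≤
            (k : ℝ) ^ ((((m : ℝ), (0 : ℝ)) : ℝ × ℝ).1) *
              (((0 : ℕ) : ℝ)) ^ ((((m : ℝ), (0 : ℝ)) : ℝ × ℝ).2) := by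
          simp only [pow_zero, mul_one]
          rw [Real.rpow_zero, mul_one, ← Real.rpow_natCast (k : ℝ) j]
          exact Real.rpow_le_rpow_of_exponent_le hk1 (by exact_mod_cast hjm.le)
        exact hle.trans (Finset.single_le_sum
          (f := fun v : ℝ × ℝ => (k : ℝ) ^ v.1 * (((0 : ℕ) : ℝ)) ^ v.2)
          (fun i hi => by
            have h0 := EF_nonneg hi
            positivity) hmem')
      · -- l = 0, α > 0 : LHS = 0
        have : ((0 : ℕ) : ℝ) ^ α = 0 := by
          rw [Nat.cast_zero]
          exact zero_pow (by omega)
        rw [this, mul_zero]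
        apply Finset.sum_nonneg
        intro i hi
        have h0 := EF_nonneg hi
        have : (0 : ℝ) ≤ (k : ℝ) := by positivity
        positivity
    · -- l ≥ 1
      have hl1 : (1 : ℝ) ≤ (l : ℝ) := by exact_mod_cast hl
      have := pow_le_sum_EF hne hN hk1 hl1
      rwa [Real.rpow_natCast, Real.rpow_natCast] at this
  · -- part (ii)
    intro hN p hp σ hσ k l hk hpl
    have hk1 : (1 : ℝ) ≤ (k : ℝ) := by exact_mod_cast hk
    set q : ℕ := l - p with hq
    have hlq : l = q + p := by omega
    -- identify d
    obtain ⟨c, hcP, hjc, hIci⟩ := dn_spec (Λ₀ := Λ₀) j α hmem hjm.le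
    have hdval : dNPa Λ₀ (j, α) = (α : ℝ) - c.2 := by
      rw [dNPa]
      rw [show {y : ℝ | ((((j, α).1 : ℕ) : ℝ), (((j, α).2 : ℕ) : ℝ) - y) ∈ NPa Λ₀} =
        {y : ℝ | (((j : ℝ), (α : ℝ) - y) : ℝ × ℝ) ∈ NPa Λ₀} from rfl, hIci]
      exact csInf_Ici
    set d : ℝ := dNPa Λ₀ (j, α) with hd
    have hdmemN : (((j : ℝ), (α : ℝ) - d) : ℝ × ℝ) ∈ NPa Λ₀ := by
      have hm : d ∈ Set.Ici ((α : ℝ) - c.2) := by rw [hdval]; exact Set.self_mem_Ici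
      rw [← hIci] at hm
      exact hm
    have hdpos : 0 < d := by
      by_contra hdn
      push_neg at hdn
      have h0 : (0 : ℝ) ∈ Set.Ici ((α : ℝ) - c.2) := by
        rw [← hdval]; exact hdn
      have h0' : (0 : ℝ) ∈ {y : ℝ | (((j : ℝ), (α : ℝ) - y) : ℝ × ℝ) ∈ NPa Λ₀} := by
        rw [hIci]; exact h0
      have h0'' : (((j : ℝ), (α : ℝ) - 0) : ℝ × ℝ) ∈ NPa Λ₀ := h0'
      rw [sub_zero] at h0''
      exact hN h0''
    have hppos : (0 : ℝ) < (p : ℝ) := by exact_mod_cast hp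
    have hσ1 : d / (p : ℝ) ≤ σ - 1 := by linarith
    have hdp_nonneg : 0 ≤ d / (p : ℝ) := div_nonneg hdpos.le hppos.le
    -- A = l!/q!
    set A : ℝ := (l.factorial : ℝ) / (q.factorial : ℝ) with hA
    have hqfac_pos : (0 : ℝ) < (q.factorial : ℝ) := by exact_mod_cast q.factorial_pos
    have hA1 : (1 : ℝ) ≤ A := by
      rw [hA, le_div_iff₀ hqfac_pos, one_mul]
      exact_mod_cast Nat.factorial_le (by omega : q ≤ l)
    have hAq : ((q : ℝ)) ^ (p : ℕ) ≤ A := by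
      rw [hA, le_div_iff₀ hqfac_pos]
      have hfa : q ^ p * q.factorial ≤ l.factorial := by
        rw [hlq]; exact fact_aux q p
      exact_mod_cast hfa
    rcases Nat.eq_zero_or_pos q with hq0 | hqpos
    · -- q = 0 : the numerator vanishes
      have hα : α ≠ 0 := by
        intro h0
        apply hN
        subst h0
        have hm0P : (((m : ℝ), (0 : ℝ)) : ℝ × ℝ) ∈ Pol Λ₀ :=
          subset_convexHull ℝ _ ⟨(m, 0), hmem, by norm_num⟩
        refine mem_npa_of_le (Pol_subset_npa Λ₀ hm0P) ?_ ?_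
        · show (j : ℝ) ≤ (m : ℝ)
          exact_mod_cast hjm.le
        · show ((0 : ℕ) : ℝ) ≤ (0 : ℝ)
          norm_num
      have hzero : ((q : ℕ) : ℝ) ^ α = 0 := by
        rw [hq0]
        simp [zero_pow hα]
      rw [hzero, mul_zero, zero_div]
      have hA0 : (0 : ℝ) ≤ A := le_trans zero_le_one hA1
      exact Real.rpow_nonneg hA0 _
    · -- q ≥ 1
      have hq1 : (1 : ℝ) ≤ (q : ℝ) := by exact_mod_cast hqpos
      have hq0R : (0 : ℝ) < (q : ℝ) := lt_of_lt_of_le one_pos hq1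
      have hsum_mono : ∑ v ∈ EF Λ₀, (k : ℝ) ^ v.1 * ((q : ℕ) : ℝ) ^ v.2 ≤ phiA Λ₀ k l := by
        rw [phiA_eq]
        apply Finset.sum_le_sum
        intro v hv
        have h0 := EF_nonneg hv
        refine mul_le_mul_of_nonneg_left ?_ (Real.rpow_nonneg (by positivity) _)
        exact Real.rpow_le_rpow hq0R.le (Nat.cast_le.2 (by omega)) h0.2
      have hbound : (k : ℝ) ^ ((j : ℕ) : ℝ) * (q : ℝ) ^ ((α : ℝ) - d) ≤ phiA Λ₀ k l :=
        (pow_le_sum_EF hne hdmemN hk1 hq1).trans hsum_mono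
      have hkj : (k : ℝ) ^ ((j : ℕ) : ℝ) = (k : ℝ) ^ j := Real.rpow_natCast _ _
      have hqsub : (q : ℝ) ^ ((α : ℝ) - d) = (q : ℝ) ^ α / (q : ℝ) ^ d := by
        rw [Real.rpow_sub hq0R, Real.rpow_natCast]
      set N : ℝ := (k : ℝ) ^ j * (q : ℝ) ^ α with hNdef
      have hNpos : 0 < N := by
        have : (0:ℝ) < (k:ℝ) := lt_of_lt_of_le one_pos hk1
        positivity
      have hqd_pos : (0 : ℝ) < (q : ℝ) ^ d := Real.rpow_pos_of_pos hq0R _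
      have hΦge : N / (q : ℝ) ^ d ≤ phiA Λ₀ k l := by
        rw [hNdef, mul_div_assoc, ← hqsub, ← hkj]
        exact hbound
      have hΦpos : 0 < phiA Λ₀ k l := lt_of_lt_of_le (by positivity) hΦge
      have hqd_le : (q : ℝ) ^ d ≤ A ^ (σ - 1) := by
        have hpd : (p : ℝ) * (d / (p : ℝ)) = d := by field_simp
        have h1 : (q : ℝ) ^ d = ((q : ℝ) ^ ((p : ℝ))) ^ (d / (p : ℝ)) := by
          rw [← Real.rpow_mul hq0R.le, hpd]
        rw [h1]
        have h2 : ((q : ℝ) ^ ((p : ℝ))) ≤ A := by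
          rw [Real.rpow_natCast]; exact hAq
        calc ((q : ℝ) ^ ((p : ℝ))) ^ (d / (p : ℝ))
            ≤ A ^ (d / (p : ℝ)) :=
              Real.rpow_le_rpow (Real.rpow_nonneg hq0R.le _) h2 hdp_nonneg
          _ ≤ A ^ (σ - 1) := Real.rpow_le_rpow_of_exponent_le hA1 hσ1
      rw [div_le_iff₀ hΦpos]
      calc N = (q : ℝ) ^ d * (N / (q : ℝ) ^ d) := by field_simp
        _ ≤ A ^ (σ - 1) * phiA Λ₀ k l :=
            mul_le_mul hqd_le hΦge (by positivity)
              (Real.rpow_nonneg (le_trans zero_le_one hA1) _)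
end
end

section
/- Let m, n, p ∈ ℕ with m ≥ 1, n ≥ 0 and p ≥ 1, let j ∈ ℕ with 0 ≤ j < m, and let α ∈ ℕ with α > n(m−j)/m; set d = α − n(m−j)/m > 0. Then for every real σ ≥ (p+d)/p one has k^j (l−p)^α ≤ (k^m + l^n) · (l!/(l−p)!)^{σ−1} for every (k,l) ∈ ℕ*×ℕ with l ≥ p. -/
/-- **Lemma 3.6** (Lastra–Tahara). Let `m,n,p ∈ ℕ` with `m ≥ 1`, `p ≥ 1`, let `0 ≤ j < m`
and `α > n(m−j)/m`, and set `d = α − n(m−j)/m`. If `σ ≥ (p+d)/p`, then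
`k^j (l−p)^α ≤ (k^m + l^n) (l!/(l−p)!)^{σ−1}` for all `(k,l) ∈ ℕ* × ℕ` with `l ≥ p`. -/
theorem young_newton_estimate (m n p j α : ℕ) (hm : 1 ≤ m) (hp : 1 ≤ p) (hj : j < m)
    (hα : (n : ℝ) * ((m : ℝ) - (j : ℝ)) / (m : ℝ) < (α : ℝ))
    (d σ : ℝ) (hd : d = (α : ℝ) - (n : ℝ) * ((m : ℝ) - (j : ℝ)) / (m : ℝ))
    (hσ : ((p : ℝ) + d) / (p : ℝ) ≤ σ) :
    ∀ k l : ℕ, 1 ≤ k → p ≤ l →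
      (k : ℝ) ^ j * ((l - p : ℕ) : ℝ) ^ α ≤
        ((k : ℝ) ^ m + (l : ℝ) ^ n) *
          ((l.factorial : ℝ) / ((l - p).factorial : ℝ)) ^ (σ - 1) := by
  intro k l hk hl
  have hm0 : (0:ℝ) < (m:ℝ) := by exact_mod_cast hm
  have hmj : (j:ℝ) < (m:ℝ) := by exact_mod_cast hj
  set t : ℝ := (n : ℝ) * ((m : ℝ) - (j : ℝ)) / (m : ℝ) with ht
  have ht0 : 0 ≤ t := by
    apply div_nonneg _ hm0.le
    have : (0:ℝ) ≤ (m:ℝ) - (j:ℝ) := by linarith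
    positivity
  have hd0 : 0 < d := by rw [hd]; linarith
  have hp0 : (0:ℝ) < (p:ℝ) := by exact_mod_cast hp
  have hk1 : (1:ℝ) ≤ (k:ℝ) := by exact_mod_cast hk
  have hl1 : (1:ℝ) ≤ (l:ℝ) := by exact_mod_cast hp.trans hl
  have hσ1 : d / (p:ℝ) ≤ σ - 1 := by
    have h := hσ
    rw [add_div, div_self hp0.ne'] at h
    linarith
  -- rewrite the factorial quotient as a descending factorial
  have hF : (l.factorial : ℝ) / ((l - p).factorial : ℝ) = (l.descFactorial p : ℝ) := by
    rw [div_eq_iff (by positivity : ((l - p).factorial : ℝ) ≠ 0)]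
    rw [mul_comm]
    exact_mod_cast (Nat.factorial_mul_descFactorial hl).symm
  have hF1 : (1:ℝ) ≤ (l.descFactorial p : ℝ) := by
    have h1 : 1 ≤ (l + 1 - p) ^ p := Nat.one_le_pow _ _ (by omega)
    exact_mod_cast h1.trans (Nat.pow_sub_le_descFactorial l p)
  have hFa : (((l - p : ℕ)) : ℝ) ^ p ≤ (l.descFactorial p : ℝ) := by
    have h1 : (l - p) ^ p ≤ (l + 1 - p) ^ p := Nat.pow_le_pow_left (by omega) p
    exact_mod_cast h1.trans (Nat.pow_sub_le_descFactorial l p)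
  rw [hF]
  set F : ℝ := (l.descFactorial p : ℝ)
  have hFσ : (0:ℝ) ≤ F ^ (σ - 1) := Real.rpow_nonneg (by linarith) _
  have hα1 : 1 ≤ α := by
    by_contra h
    have : α = 0 := by omega
    rw [this] at hα
    simp at hα
    rw [ht] at ht0
    linarith
  rcases eq_or_lt_of_le hl with heq | hlt
  · -- l = p : left side is zero
    have : l - p = 0 := by omega
    rw [this]
    have : ((0:ℕ):ℝ) ^ α = 0 := by
      rw [Nat.cast_zero, zero_pow (by omega)]
    rw [this, mul_zero]
    have hS : (0:ℝ) < (k:ℝ) ^ m + (l:ℝ) ^ n := by positivity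
    positivity
  · set a : ℝ := ((l - p : ℕ) : ℝ) with ha
    have ha1 : (1:ℝ) ≤ a := by
      rw [ha]; exact_mod_cast Nat.one_le_iff_ne_zero.mpr (by omega)
    have ha0 : (0:ℝ) < a := by linarith
    have hal : a ≤ (l:ℝ) := by rw [ha]; exact_mod_cast Nat.sub_le l p
    set S : ℝ := (k:ℝ) ^ m + (l:ℝ) ^ n with hS
    have hS1 : (1:ℝ) ≤ S := by
      have h1 : (1:ℝ) ≤ (k:ℝ) ^ m := one_le_pow₀ hk1
      have h2 : (0:ℝ) ≤ (l:ℝ) ^ n := by positivity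
      rw [hS]; linarith
    have hS0 : (0:ℝ) < S := by linarith
    -- split a^α = a^t * a^d
    have hsplit : a ^ α = a ^ t * a ^ d := by
      rw [← Real.rpow_natCast a α, show (α:ℝ) = t + d by rw [hd]; ring,
        Real.rpow_add ha0]
    -- Step 1 : k^j * a^t ≤ S
    have hkj : (k:ℝ) ^ j ≤ S ^ ((j:ℝ) / (m:ℝ)) := by
      have e1 : ((k:ℝ) ^ m) ^ ((j:ℝ) / (m:ℝ)) = (k:ℝ) ^ j := by
        rw [← Real.rpow_natCast (k:ℝ) m, ← Real.rpow_mul (by linarith),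
          show (m:ℝ) * ((j:ℝ)/(m:ℝ)) = (j:ℝ) by field_simp, Real.rpow_natCast]
      rw [← e1]
      apply Real.rpow_le_rpow (by positivity) (by rw [hS]; exact le_add_of_nonneg_right (by positivity))
      positivity
    have hat : a ^ t ≤ S ^ (((m:ℝ) - (j:ℝ)) / (m:ℝ)) := by
      have e1 : ((l:ℝ) ^ n) ^ (((m:ℝ) - (j:ℝ)) / (m:ℝ)) = (l:ℝ) ^ t := by
        rw [← Real.rpow_natCast (l:ℝ) n, ← Real.rpow_mul (by linarith),
          show (n:ℝ) * (((m:ℝ)-(j:ℝ))/(m:ℝ)) = t by rw [ht]; ring]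
      have h2 : a ^ t ≤ (l:ℝ) ^ t := Real.rpow_le_rpow ha0.le hal ht0
      rw [← e1] at h2
      refine h2.trans ?_
      apply Real.rpow_le_rpow (by positivity) (by rw [hS]; exact le_add_of_nonneg_left (by positivity))
      have : (0:ℝ) ≤ (m:ℝ) - (j:ℝ) := by linarith
      positivity
    have hstep1 : (k:ℝ) ^ j * a ^ t ≤ S := by
      have := mul_le_mul hkj hat (Real.rpow_nonneg ha0.le t) (by positivity)
      rwa [← Real.rpow_add hS0,
        show (j:ℝ)/(m:ℝ) + ((m:ℝ)-(j:ℝ))/(m:ℝ) = 1 by field_simp; ring,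
        Real.rpow_one] at this
    -- Step 2 : a^d ≤ F^(σ-1)
    have hstep2 : a ^ d ≤ F ^ (σ - 1) := by
      have e1 : a ^ d = (a ^ p) ^ (d / (p:ℝ)) := by
        rw [← Real.rpow_natCast a p, ← Real.rpow_mul ha0.le,
          show (p:ℝ) * (d/(p:ℝ)) = d by field_simp]
      rw [e1]
      have h2 : (a ^ p) ^ (d / (p:ℝ)) ≤ F ^ (d / (p:ℝ)) :=
        Real.rpow_le_rpow (by positivity) hFa (by positivity)
      exact h2.trans (Real.rpow_le_rpow_of_exponent_le hF1 hσ1)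
    calc (k:ℝ) ^ j * a ^ α = ((k:ℝ) ^ j * a ^ t) * a ^ d := by
          rw [hsplit]; ring
      _ ≤ S * F ^ (σ - 1) := by
          apply mul_le_mul hstep1 hstep2 (Real.rpow_nonneg ha0.le d) hS0.le
end

section
/- Let m_i, m_{i+1}, n_i, n_{i+1}, p ∈ ℕ with m_i ≥ 1 and p ≥ 1, let j ∈ ℕ with m_{i+1} ≤ j < m_i, assume n_{i+1} ≥ n_i, and let α ∈ ℕ with α > n_i + (n_{i+1}−n_i)(m_i−j)/(m_i−m_{i+1}); set d = α − n_i − (n_{i+1}−n_i)(m_i−j)/(m_i−m_{i+1}) > 0. Then for every real σ ≥ (p+d)/p one has k^j (l−p)^α / (k^{m_i} l^{n_i} + k^{m_{i+1}} l^{n_{i+1}}) ≤ (l!/(l−p)!)^{σ−1} for every (k,l) ∈ ℕ*×ℕ with l ≥ p. -/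
set_option maxHeartbeats 1000000 in
/-- **Lemma 3.7** (Lastra–Tahara). Let `m_i, m_{i+1}, n_i, n_{i+1}, p ∈ ℕ` with
`m_i ≥ 1`, `p ≥ 1`, let `m_{i+1} ≤ j < m_i`, `n_{i+1} ≥ n_i`, and
`α > n_i + (n_{i+1}−n_i)(m_i−j)/(m_i−m_{i+1})`; set
`d = α − n_i − (n_{i+1}−n_i)(m_i−j)/(m_i−m_{i+1})`. If `σ ≥ (p+d)/p`, then
`k^j (l−p)^α / (k^{m_i} l^{n_i} + k^{m_{i+1}} l^{n_{i+1}}) ≤ (l!/(l−p)!)^{σ−1}`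
for all `(k,l) ∈ ℕ* × ℕ` with `l ≥ p`. -/
theorem young_newton_side_estimate (mi mi1 ni ni1 p j α : ℕ)
    (hmi : 1 ≤ mi) (hp : 1 ≤ p) (hj1 : mi1 ≤ j) (hj2 : j < mi) (hn : ni ≤ ni1)
    (hα : (ni : ℝ) + ((ni1 : ℝ) - (ni : ℝ)) * ((mi : ℝ) - (j : ℝ)) /
            ((mi : ℝ) - (mi1 : ℝ)) < (α : ℝ))
    (d σ : ℝ)
    (hd : d = (α : ℝ) - (ni : ℝ) - ((ni1 : ℝ) - (ni : ℝ)) * ((mi : ℝ) - (j : ℝ)) /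
            ((mi : ℝ) - (mi1 : ℝ)))
    (hσ : ((p : ℝ) + d) / (p : ℝ) ≤ σ) :
    ∀ k l : ℕ, 1 ≤ k → p ≤ l →
      (k : ℝ) ^ j * ((l - p : ℕ) : ℝ) ^ α /
          ((k : ℝ) ^ mi * (l : ℝ) ^ ni + (k : ℝ) ^ mi1 * (l : ℝ) ^ ni1) ≤
        ((l.factorial : ℝ) / ((l - p).factorial : ℝ)) ^ (σ - 1) := by
  intro k l hk hl
  have hk0 : (0:ℝ) < (k:ℝ) := by exact_mod_cast hk
  have hl0 : (0:ℝ) < (l:ℝ) := by exact_mod_cast lt_of_lt_of_le hp hl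
  have hmm : mi1 < mi := lt_of_le_of_lt hj1 hj2
  have hM : (0:ℝ) < (mi:ℝ) - (mi1:ℝ) := by
    have : (mi1:ℝ) < (mi:ℝ) := by exact_mod_cast hmm
    linarith
  have hjm : (j:ℝ) < (mi:ℝ) := by exact_mod_cast hj2
  have hjm1 : (mi1:ℝ) ≤ (j:ℝ) := by exact_mod_cast hj1
  have hnn : (ni:ℝ) ≤ (ni1:ℝ) := by exact_mod_cast hn
  have hfrac : 0 ≤ ((ni1:ℝ) - ni) * ((mi:ℝ) - j) / ((mi:ℝ) - mi1) :=
    div_nonneg (mul_nonneg (by linarith) (by linarith)) hM.le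
  have hdpos : 0 < d := by rw [hd]; linarith
  have hαd : 0 ≤ (α:ℝ) - d := by
    rw [hd]
    have hni : (0:ℝ) ≤ (ni:ℝ) := Nat.cast_nonneg ni
    linarith
  have hα1 : 1 ≤ α := by
    by_contra h
    push_neg at h
    interval_cases α
    simp at hα
    nlinarith [Nat.cast_nonneg (α := ℝ) ni]
  have hRHSnn : (0:ℝ) ≤ ((l.factorial : ℝ) / ((l - p).factorial : ℝ)) ^ (σ - 1) :=
    Real.rpow_nonneg (by positivity) _
  rcases Nat.eq_or_lt_of_le hl with hlp | hlp
  · -- l = p, numerator is 0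
    have h0 : l - p = 0 := by omega
    rw [h0] at hRHSnn ⊢
    simp only [Nat.cast_zero, zero_pow (by omega : α ≠ 0), mul_zero, zero_div]
    exact hRHSnn
  · -- main case: q = l - p ≥ 1
    set q : ℕ := l - p with hq
    have hq1 : 1 ≤ q := by omega
    have hq0 : (0:ℝ) < (q:ℝ) := by exact_mod_cast hq1
    have hql : (q:ℝ) ≤ (l:ℝ) := by exact_mod_cast Nat.sub_le l p
    set w1 : ℝ := ((j:ℝ) - mi1) / ((mi:ℝ) - mi1) with hw1def
    set w2 : ℝ := ((mi:ℝ) - j) / ((mi:ℝ) - mi1) with hw2def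
    have hw1 : 0 ≤ w1 := div_nonneg (by linarith) hM.le
    have hw2 : 0 ≤ w2 := div_nonneg (by linarith) hM.le
    have hw : w1 + w2 = 1 := by rw [hw1def, hw2def]; field_simp; ring
    have hp1 : (0:ℝ) ≤ (k:ℝ) ^ mi * (l:ℝ) ^ ni := by positivity
    have hp2 : (0:ℝ) ≤ (k:ℝ) ^ mi1 * (l:ℝ) ^ ni1 := by positivity
    -- exponent identities
    have e1 : (mi:ℝ) * w1 + (mi1:ℝ) * w2 = (j:ℝ) := by
      rw [hw1def, hw2def]; field_simp; ring
    have e2 : (ni:ℝ) * w1 + (ni1:ℝ) * w2 = (α:ℝ) - d := by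
      rw [hw1def, hw2def, hd]; field_simp; ring
    -- geometric mean equals k^j * l^(α-d)
    have hgm : ((k:ℝ) ^ mi * (l:ℝ) ^ ni) ^ w1 * ((k:ℝ) ^ mi1 * (l:ℝ) ^ ni1) ^ w2
        = (k:ℝ) ^ j * (l:ℝ) ^ ((α:ℝ) - d) := by
      rw [Real.mul_rpow (by positivity) (by positivity),
          Real.mul_rpow (by positivity) (by positivity),
          ← Real.rpow_natCast (k:ℝ) mi, ← Real.rpow_natCast (l:ℝ) ni,
          ← Real.rpow_natCast (k:ℝ) mi1, ← Real.rpow_natCast (l:ℝ) ni1,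
          ← Real.rpow_mul hk0.le, ← Real.rpow_mul hl0.le,
          ← Real.rpow_mul hk0.le, ← Real.rpow_mul hl0.le]
      rw [show (k:ℝ) ^ ((mi:ℝ)*w1) * (l:ℝ) ^ ((ni:ℝ)*w1) *
            ((k:ℝ) ^ ((mi1:ℝ)*w2) * (l:ℝ) ^ ((ni1:ℝ)*w2))
          = ((k:ℝ) ^ ((mi:ℝ)*w1) * (k:ℝ) ^ ((mi1:ℝ)*w2)) *
            ((l:ℝ) ^ ((ni:ℝ)*w1) * (l:ℝ) ^ ((ni1:ℝ)*w2)) by ring,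
        ← Real.rpow_add hk0, ← Real.rpow_add hl0, e1, e2, Real.rpow_natCast]
    -- denominator lower bound
    have hden : (k:ℝ) ^ j * (l:ℝ) ^ ((α:ℝ) - d)
        ≤ (k:ℝ) ^ mi * (l:ℝ) ^ ni + (k:ℝ) ^ mi1 * (l:ℝ) ^ ni1 := by
      rw [← hgm]
      calc ((k:ℝ) ^ mi * (l:ℝ) ^ ni) ^ w1 * ((k:ℝ) ^ mi1 * (l:ℝ) ^ ni1) ^ w2
          ≤ w1 * ((k:ℝ) ^ mi * (l:ℝ) ^ ni) + w2 * ((k:ℝ) ^ mi1 * (l:ℝ) ^ ni1) :=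
            Real.geom_mean_le_arith_mean2_weighted hw1 hw2 hp1 hp2 hw
        _ ≤ (k:ℝ) ^ mi * (l:ℝ) ^ ni + (k:ℝ) ^ mi1 * (l:ℝ) ^ ni1 := by
            have h1 : w1 ≤ 1 := by linarith
            have h2 : w2 ≤ 1 := by linarith
            nlinarith
    have hdenpos : (0:ℝ) < (k:ℝ) ^ j * (l:ℝ) ^ ((α:ℝ) - d) := by positivity
    -- factorial bound : q^p ≤ l!/q!
    have hfactN : q ^ p * q.factorial ≤ l.factorial := by
      have h1 : q.factorial * (q + 1) ^ p ≤ (q + p).factorial :=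
        Nat.factorial_mul_pow_le_factorial
      have h2 : q + p = l := by omega
      have h3 : q ^ p ≤ (q + 1) ^ p := Nat.pow_le_pow_left (by omega) p
      calc q ^ p * q.factorial ≤ (q + 1) ^ p * q.factorial :=
            Nat.mul_le_mul_right _ h3
        _ = q.factorial * (q + 1) ^ p := by ring
        _ ≤ (q + p).factorial := h1
        _ = l.factorial := by rw [h2]
    have hqfpos : (0:ℝ) < (q.factorial : ℝ) := by positivity
    have hfactR : (q:ℝ) ^ p ≤ (l.factorial : ℝ) / (q.factorial : ℝ) := by
      rw [le_div_iff₀ hqfpos]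
      exact_mod_cast hfactN
    have hF1 : (1:ℝ) ≤ (l.factorial : ℝ) / (q.factorial : ℝ) := by
      rw [le_div_iff₀ hqfpos, one_mul]
      exact_mod_cast Nat.factorial_le (by omega : q ≤ l)
    have hpR : (0:ℝ) < (p:ℝ) := by exact_mod_cast hp
    have hdp : d / (p:ℝ) ≤ σ - 1 := by
      rw [div_le_iff₀ hpR] at *
      nlinarith [hσ]
    -- main chain
    calc (k : ℝ) ^ j * ((q : ℕ) : ℝ) ^ α /
          ((k : ℝ) ^ mi * (l : ℝ) ^ ni + (k : ℝ) ^ mi1 * (l : ℝ) ^ ni1)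
        ≤ (k : ℝ) ^ j * (q:ℝ) ^ α / ((k:ℝ) ^ j * (l:ℝ) ^ ((α:ℝ) - d)) := by
          apply div_le_div_of_nonneg_left (by positivity) hdenpos hden
      _ = (q:ℝ) ^ α / (l:ℝ) ^ ((α:ℝ) - d) := by
          rw [mul_div_mul_left _ _ (by positivity : ((k:ℝ)^j) ≠ 0)]
      _ ≤ (q:ℝ) ^ α / (q:ℝ) ^ ((α:ℝ) - d) := by
          apply div_le_div_of_nonneg_left (by positivity) (by positivity)
          exact Real.rpow_le_rpow hq0.le hql hαd
      _ = (q:ℝ) ^ d := by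
          rw [← Real.rpow_natCast (q:ℝ) α, ← Real.rpow_sub hq0]
          ring_nf
      _ = ((q:ℝ) ^ p) ^ (d / (p:ℝ)) := by
          rw [← Real.rpow_natCast (q:ℝ) p, ← Real.rpow_mul hq0.le]
          congr 1
          field_simp
      _ ≤ ((l.factorial : ℝ) / (q.factorial : ℝ)) ^ (d / (p:ℝ)) :=
          Real.rpow_le_rpow (by positivity) hfactR (by positivity)
      _ ≤ ((l.factorial : ℝ) / (q.factorial : ℝ)) ^ (σ - 1) :=
          Real.rpow_le_rpow_of_exponent_le hF1 hdp
end

section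
/- Let m, L, k, i, n ∈ ℕ with k ≥ 2, n ≥ 1 and 2 ≤ i+n ≤ k, let s ≥ 1 be real, and let M ∈ ℝ with 0 ≤ M ≤ L and (i+n−1)(s−1) ≥ M−m. Then: (i) ((k−i−n)!)^{s−1} / k^{L+m−M} ≤ ((k−1)!)^{s−1} (i+n)^{[M−m]₊} / k^L, where [y]₊ = max(y,0); (ii) for any positive integers k₁, …, k_n with i + k₁ + ⋯ + k_n = k, one has (1/k^m) ∏_{h=1}^{n} ((k_h−1)!)^{s−1} / k_h^{L−M} ≤ ((k−1)!)^{s−1} (i+n)^L / k^L. -/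
open Finset

lemma fact_split (a : ℕ) : ∀ b, a ≤ b →
    b.factorial = a.factorial * ∏ j ∈ Finset.Ico a b, (j + 1) := by
  intro b
  induction b with
  | zero => intro h; simp [Nat.le_zero.mp h]
  | succ b ih =>
    intro h
    rcases eq_or_lt_of_le h with heq | hlt
    · simp [heq]
    · have hab : a ≤ b := Nat.lt_succ_iff.mp hlt
      rw [Finset.prod_Ico_succ_top hab, ← mul_assoc, ← ih hab, Nat.factorial_succ]
      ring

lemma factA (k p : ℕ) (hp1 : 1 ≤ p) (hpk : p ≤ k) :
    ((k : ℝ) / (p : ℝ)) ^ (p - 1 : ℕ) * ((k - p).factorial : ℝ) ≤ ((k - 1).factorial : ℝ) := by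
  have hp0 : (0 : ℝ) < p := by positivity
  have hcast : ((k - 1).factorial : ℝ)
      = ((k - p).factorial : ℝ) * ∏ j ∈ Finset.Ico (k - p) (k - 1), ((j : ℝ) + 1) := by
    rw [fact_split (k - p) (k - 1) (by omega)]
    push_cast
    ring
  rw [hcast]
  rw [mul_comm]
  have hk0 : (0 : ℝ) ≤ (k : ℝ) / p := by positivity
  apply mul_le_mul_of_nonneg_left _ (by positivity)
  calc ((k : ℝ) / p) ^ (p - 1 : ℕ)
      = ∏ _j ∈ Finset.Ico (k - p) (k - 1), ((k : ℝ) / p) := by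
        rw [Finset.prod_const, Nat.card_Ico]
        congr 1
        omega
    _ ≤ ∏ j ∈ Finset.Ico (k - p) (k - 1), ((j : ℝ) + 1) := by
        apply Finset.prod_le_prod (fun j _ => hk0)
        intro j hj
        rw [Finset.mem_Ico] at hj
        rw [div_le_iff₀ hp0]
        have : k ≤ (j + 1) * p := by
          calc k ≤ (k - p + 1) * p := by
                have h1 : k - p ≤ (k - p) * p := Nat.le_mul_of_pos_right _ (by omega)
                have : (k - p + 1) * p = (k - p) * p + p := by ring
                omega
            _ ≤ (j + 1) * p := by
                apply Nat.mul_le_mul_right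
                omega
        exact_mod_cast this

lemma part_i (m L k p : ℕ) (hk2 : 2 ≤ k) (hp2 : 2 ≤ p) (hpk : p ≤ k)
    (s M : ℝ) (hs : 1 ≤ s) (hM0 : 0 ≤ M) (hML : M ≤ (L : ℝ))
    (hMm : M - (m : ℝ) ≤ ((p : ℝ) - 1) * (s - 1)) :
    ((k - p).factorial : ℝ) ^ (s - 1) / (k : ℝ) ^ ((L : ℝ) + (m : ℝ) - M) ≤
      ((k - 1).factorial : ℝ) ^ (s - 1) * (p : ℝ) ^ (max (M - (m : ℝ)) 0) /
        (k : ℝ) ^ (L : ℝ) := by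
  have hk0 : (0 : ℝ) < k := by positivity
  have hk1 : (1 : ℝ) ≤ k := by exact_mod_cast Nat.one_le_of_lt hk2
  have hp0 : (0 : ℝ) < p := by positivity
  have hs1 : (0 : ℝ) ≤ s - 1 := by linarith
  rcases le_or_gt M (m : ℝ) with hcase | hcase
  · rw [max_eq_right (by linarith), Real.rpow_zero, mul_one]
    apply div_le_div₀ (by positivity)
    · apply Real.rpow_le_rpow (by positivity) _ hs1
      exact_mod_cast Nat.factorial_le (by omega)
    · positivity
    · exact Real.rpow_le_rpow_of_exponent_le hk1 (by linarith)
  · rw [max_eq_left (by linarith)]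
    have hkp1 : (1 : ℝ) ≤ (k : ℝ) / p := by
      rw [le_div_iff₀ hp0, one_mul]
      exact_mod_cast hpk
    have key : ((k - p).factorial : ℝ) ^ (s - 1) * (k : ℝ) ^ (M - m) ≤
        ((k - 1).factorial : ℝ) ^ (s - 1) * (p : ℝ) ^ (M - m) := by
      have h1 : ((k : ℝ) / p) ^ (((p : ℝ) - 1) * (s - 1)) *
          ((k - p).factorial : ℝ) ^ (s - 1) ≤ ((k - 1).factorial : ℝ) ^ (s - 1) := by
        have := Real.rpow_le_rpow (by positivity) (factA k p (by omega) hpk) hs1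
        rw [Real.mul_rpow (by positivity) (by positivity)] at this
        rw [← Real.rpow_natCast ((k : ℝ) / p) (p - 1), ← Real.rpow_mul (by positivity)] at this
        have hc : ((p - 1 : ℕ) : ℝ) = (p : ℝ) - 1 := by
          push_cast [Nat.cast_sub (by omega : 1 ≤ p)]; ring
        rwa [hc] at this
      have h2 : ((k : ℝ) / p) ^ (M - m) ≤ ((k : ℝ) / p) ^ (((p : ℝ) - 1) * (s - 1)) :=
        Real.rpow_le_rpow_of_exponent_le hkp1 hMm
      have h3 : ((k - p).factorial : ℝ) ^ (s - 1) * ((k : ℝ) / p) ^ (M - m) ≤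
          ((k - 1).factorial : ℝ) ^ (s - 1) := by
        calc ((k - p).factorial : ℝ) ^ (s - 1) * ((k : ℝ) / p) ^ (M - m)
            ≤ ((k - p).factorial : ℝ) ^ (s - 1) * ((k : ℝ) / p) ^ (((p : ℝ) - 1) * (s - 1)) := by
              gcongr
          _ ≤ ((k - 1).factorial : ℝ) ^ (s - 1) := by rw [mul_comm]; exact h1
      rw [Real.div_rpow (by positivity) (by positivity)] at h3
      calc ((k - p).factorial : ℝ) ^ (s - 1) * (k : ℝ) ^ (M - m)
          = ((k - p).factorial : ℝ) ^ (s - 1) * ((k : ℝ) ^ (M - m) / (p : ℝ) ^ (M - m)) *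
              (p : ℝ) ^ (M - m) := by
            field_simp
        _ ≤ ((k - 1).factorial : ℝ) ^ (s - 1) * (p : ℝ) ^ (M - m) := by
            gcongr
    have hden : (k : ℝ) ^ ((L : ℝ) + (m : ℝ) - M) = (k : ℝ) ^ (L : ℝ) / (k : ℝ) ^ (M - m) := by
      rw [← Real.rpow_sub hk0]
      ring_nf
    rw [hden, div_div_eq_mul_div]
    gcongr

/-- **Lemma 4.2** (Lastra–Tahara). Let `m, L, k, i, n ∈ ℕ` with `k ≥ 2`, `n ≥ 1`,
`2 ≤ i+n ≤ k`, let `s ≥ 1` be real, and let `M ∈ ℝ` with `0 ≤ M ≤ L` and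
`(i+n−1)(s−1) ≥ M−m`. Then
(i) `(k−i−n)!^{s−1}/k^{L+m−M} ≤ (k−1)!^{s−1} (i+n)^{[M−m]₊}/k^L`;
(ii) for positive integers `k₁,…,k_n` with `i+k₁+⋯+k_n = k`,
`(1/k^m) ∏_h (k_h−1)!^{s−1}/k_h^{L−M} ≤ (k−1)!^{s−1} (i+n)^L/k^L`. -/
theorem factorial_distribution_estimates (m L k i n : ℕ)
    (hk : 2 ≤ k) (hn : 1 ≤ n) (hin2 : 2 ≤ i + n) (hink : i + n ≤ k)
    (s : ℝ) (hs : 1 ≤ s) (M : ℝ) (hM0 : 0 ≤ M) (hML : M ≤ (L : ℝ))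
    (hMm : M - (m : ℝ) ≤ ((i : ℝ) + (n : ℝ) - 1) * (s - 1)) :
    (((k - i - n).factorial : ℝ) ^ (s - 1) / (k : ℝ) ^ ((L : ℝ) + (m : ℝ) - M) ≤
      ((k - 1).factorial : ℝ) ^ (s - 1) * ((i + n : ℕ) : ℝ) ^ (max (M - (m : ℝ)) 0) /
        (k : ℝ) ^ (L : ℝ)) ∧
    (∀ kv : Fin n → ℕ, (∀ h, 1 ≤ kv h) → i + ∑ h, kv h = k →
      (1 / (k : ℝ) ^ (m : ℕ)) *
          ∏ h, ((kv h - 1).factorial : ℝ) ^ (s - 1) / ((kv h : ℝ) ^ ((L : ℝ) - M)) ≤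
        ((k - 1).factorial : ℝ) ^ (s - 1) * ((i + n : ℕ) : ℝ) ^ (L : ℝ) / (k : ℝ) ^ (L : ℝ)) := by
  have hMm' : M - (m : ℝ) ≤ (((i + n : ℕ) : ℝ) - 1) * (s - 1) := by
    push_cast; push_cast at hMm; linarith
  have hsub : k - i - n = k - (i + n) := by omega
  have hpartI := part_i m L k (i + n) hk hin2 hink s M hs hM0 hML hMm'
  rw [hsub]
  refine ⟨hpartI, ?_⟩
  intro kv hkv1 hsum
  have hk0 : (0 : ℝ) < k := by positivity
  have hp0 : (0 : ℝ) < ((i + n : ℕ) : ℝ) := by positivity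
  have hp1 : (1 : ℝ) ≤ ((i + n : ℕ) : ℝ) := by exact_mod_cast Nat.one_le_of_lt hin2
  have hs1 : (0 : ℝ) ≤ s - 1 := by linarith
  have hLM : (0 : ℝ) ≤ (L : ℝ) - M := by linarith
  -- find the max element
  have hne : (Finset.univ : Finset (Fin n)).Nonempty :=
    ⟨⟨0, by omega⟩, Finset.mem_univ _⟩
  obtain ⟨h0, -, hmax⟩ := Finset.exists_max_image Finset.univ kv hne
  have hk_le : k ≤ (i + n) * kv h0 := by
    have hsum2 : ∑ h, kv h ≤ n * kv h0 := by
      calc ∑ h, kv h ≤ ∑ _h : Fin n, kv h0 :=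
            Finset.sum_le_sum (fun h _ => hmax h (Finset.mem_univ h))
        _ = n * kv h0 := by simp [Finset.sum_const, Finset.card_univ, mul_comm]
    have hi : i ≤ i * kv h0 := Nat.le_mul_of_pos_right _ (hkv1 h0)
    calc k = i + ∑ h, kv h := hsum.symm
      _ ≤ i * kv h0 + n * kv h0 := by omega
      _ = (i + n) * kv h0 := by ring
  have hkv0 : (k : ℝ) / ((i + n : ℕ) : ℝ) ≤ (kv h0 : ℝ) := by
    rw [div_le_iff₀ hp0]
    have : (k : ℝ) ≤ ((i + n : ℕ) : ℝ) * (kv h0 : ℝ) := by exact_mod_cast hk_le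
    linarith
  -- bound the product pointwise
  set c : Fin n → ℝ := fun h => if h = h0 then ((i + n : ℕ) : ℝ) / (k : ℝ) else 1 with hc
  have hstep : ∀ h : Fin n,
      ((kv h - 1).factorial : ℝ) ^ (s - 1) / ((kv h : ℝ) ^ ((L : ℝ) - M)) ≤
      ((kv h - 1).factorial : ℝ) ^ (s - 1) * (c h) ^ ((L : ℝ) - M) := by
    intro h
    have hkvh : (1 : ℝ) ≤ (kv h : ℝ) := by exact_mod_cast hkv1 h
    rw [div_eq_mul_inv]
    apply mul_le_mul_of_nonneg_left _ (by positivity)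
    by_cases hh : h = h0
    · subst hh
      simp only [hc, if_pos rfl]
      have h1 : ((k : ℝ) / ((i + n : ℕ) : ℝ)) ^ ((L : ℝ) - M) ≤ (kv h : ℝ) ^ ((L : ℝ) - M) :=
        Real.rpow_le_rpow (by positivity) hkv0 hLM
      have h2 : (((i + n : ℕ) : ℝ) / (k : ℝ)) = ((k : ℝ) / ((i + n : ℕ) : ℝ))⁻¹ := by
        rw [inv_div]
      rw [h2, Real.inv_rpow (by positivity)]
      have hpos : (0 : ℝ) < ((k : ℝ) / ((i + n : ℕ) : ℝ)) ^ ((L : ℝ) - M) := by positivity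
      exact inv_anti₀ hpos h1
    · simp only [hc, if_neg hh]
      rw [Real.one_rpow, inv_le_one_iff₀]
      right
      exact Real.one_le_rpow hkvh hLM
  -- product of c-powers
  have hcprod : ∏ h, (c h) ^ ((L : ℝ) - M) = (((i + n : ℕ) : ℝ) / (k : ℝ)) ^ ((L : ℝ) - M) := by
    have : ∀ h : Fin n, (c h) ^ ((L : ℝ) - M) =
        if h = h0 then (((i + n : ℕ) : ℝ) / (k : ℝ)) ^ ((L : ℝ) - M) else 1 := by
      intro h
      by_cases hh : h = h0 <;> simp [hc, hh]
    rw [Finset.prod_congr rfl (fun h _ => this h), Finset.prod_ite_eq' Finset.univ h0]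
    simp
  -- factorial product bound
  have hsumeq : ∑ h, (kv h - 1) = k - (i + n) := by
    have h1 : ∑ h, (kv h - 1) + n = ∑ h, kv h := by
      calc ∑ h, (kv h - 1) + n = ∑ h, ((kv h - 1) + 1) := by
            rw [Finset.sum_add_distrib]; simp [Finset.card_univ]
        _ = ∑ h, kv h := Finset.sum_congr rfl fun h _ =>
            Nat.succ_pred_eq_of_pos (hkv1 h)
    omega
  have hfactprod : (∏ h, ((kv h - 1).factorial : ℝ)) ≤ ((k - (i + n)).factorial : ℝ) := by
    have hd : (∏ h, (kv h - 1).factorial) ∣ (∑ h, (kv h - 1)).factorial :=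
      Nat.prod_factorial_dvd_factorial_sum _ _
    have := Nat.le_of_dvd (Nat.factorial_pos _) hd
    rw [hsumeq] at this
    exact_mod_cast this
  -- chain
  have hchain1 : (1 / (k : ℝ) ^ (m : ℕ)) *
      ∏ h, ((kv h - 1).factorial : ℝ) ^ (s - 1) / ((kv h : ℝ) ^ ((L : ℝ) - M)) ≤
      (1 / (k : ℝ) ^ (m : ℕ)) * (((k - (i + n)).factorial : ℝ) ^ (s - 1) *
        (((i + n : ℕ) : ℝ) / (k : ℝ)) ^ ((L : ℝ) - M)) := by
    apply mul_le_mul_of_nonneg_left _ (by positivity)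
    calc ∏ h, ((kv h - 1).factorial : ℝ) ^ (s - 1) / ((kv h : ℝ) ^ ((L : ℝ) - M))
        ≤ ∏ h, ((kv h - 1).factorial : ℝ) ^ (s - 1) * (c h) ^ ((L : ℝ) - M) := by
          apply Finset.prod_le_prod (fun h _ => by positivity) (fun h _ => hstep h)
      _ = (∏ h, ((kv h - 1).factorial : ℝ) ^ (s - 1)) *
            (((i + n : ℕ) : ℝ) / (k : ℝ)) ^ ((L : ℝ) - M) := by
          rw [Finset.prod_mul_distrib, hcprod]
      _ = (∏ h, ((kv h - 1).factorial : ℝ)) ^ (s - 1) *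
            (((i + n : ℕ) : ℝ) / (k : ℝ)) ^ ((L : ℝ) - M) := by
          rw [Real.finset_prod_rpow _ _ (fun h _ => by positivity)]
      _ ≤ ((k - (i + n)).factorial : ℝ) ^ (s - 1) *
            (((i + n : ℕ) : ℝ) / (k : ℝ)) ^ ((L : ℝ) - M) := by
          apply mul_le_mul_of_nonneg_right _ (by positivity)
          exact Real.rpow_le_rpow (by positivity) hfactprod hs1
  have halg : (1 / (k : ℝ) ^ (m : ℕ)) * (((k - (i + n)).factorial : ℝ) ^ (s - 1) *
        (((i + n : ℕ) : ℝ) / (k : ℝ)) ^ ((L : ℝ) - M)) =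
      ((i + n : ℕ) : ℝ) ^ ((L : ℝ) - M) *
        (((k - (i + n)).factorial : ℝ) ^ (s - 1) / (k : ℝ) ^ ((L : ℝ) + (m : ℝ) - M)) := by
    have e1 : (k : ℝ) ^ ((L : ℝ) + (m : ℝ) - M) =
        (k : ℝ) ^ ((L : ℝ) - M) * (k : ℝ) ^ (m : ℕ) := by
      rw [← Real.rpow_natCast (k : ℝ) m, ← Real.rpow_add hk0]
      ring_nf
    have ha : ((k : ℝ) ^ ((L : ℝ) - M)) ≠ 0 := by positivity
    have hb : ((k : ℝ) ^ (m : ℕ)) ≠ 0 := by positivity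
    rw [Real.div_rpow (le_of_lt hp0) (le_of_lt hk0), e1]
    field_simp
  calc (1 / (k : ℝ) ^ (m : ℕ)) *
      ∏ h, ((kv h - 1).factorial : ℝ) ^ (s - 1) / ((kv h : ℝ) ^ ((L : ℝ) - M))
      ≤ ((i + n : ℕ) : ℝ) ^ ((L : ℝ) - M) *
        (((k - (i + n)).factorial : ℝ) ^ (s - 1) / (k : ℝ) ^ ((L : ℝ) + (m : ℝ) - M)) := by
        rw [← halg]; exact hchain1
    _ ≤ ((i + n : ℕ) : ℝ) ^ ((L : ℝ) - M) *
        (((k - 1).factorial : ℝ) ^ (s - 1) * ((i + n : ℕ) : ℝ) ^ (max (M - (m : ℝ)) 0) /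
          (k : ℝ) ^ (L : ℝ)) := by
        exact mul_le_mul_of_nonneg_left hpartI (by positivity)
    _ = ((k - 1).factorial : ℝ) ^ (s - 1) *
          ((i + n : ℕ) : ℝ) ^ (((L : ℝ) - M) + max (M - (m : ℝ)) 0) / (k : ℝ) ^ (L : ℝ) := by
        rw [Real.rpow_add hp0]
        ring
    _ ≤ ((k - 1).factorial : ℝ) ^ (s - 1) * ((i + n : ℕ) : ℝ) ^ (L : ℝ) / (k : ℝ) ^ (L : ℝ) := by
        gcongr
        · rcases le_total (M - (m : ℝ)) 0 with hca | hca
          · rw [max_eq_right hca]; linarith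
          · rw [max_eq_left hca]
            have hm0 : (0 : ℝ) ≤ (m : ℝ) := Nat.cast_nonneg m
            linarith
end

section
/- Let 0 ≤ a₂ < a₁ < a₀ and 0 ≤ b₀ < b₁ < b₂ be real numbers, and set h₀ = (b₁−b₀)/(a₀−a₁) and h₁ = (b₂−b₁)/(a₁−a₂). If h₀ > h₁, then there exists a constant c > 0 such that k^{a₀} l^{b₀} + k^{a₁} l^{b₁} + k^{a₂} l^{b₂} ≤ c · k^{a₁} l^{b₁} for every l ∈ ℕ* and k = ⌊l^{h₁}⌋. -/
/-- **Lemma 5.4** (Lastra–Tahara). Let `0 ≤ a₂ < a₁ < a₀` and `0 ≤ b₀ < b₁ < b₂`, and set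
`h₀ = (b₁−b₀)/(a₀−a₁)`, `h₁ = (b₂−b₁)/(a₁−a₂)`. If `h₀ > h₁`, there is `c > 0` with
`k^{a₀} l^{b₀} + k^{a₁} l^{b₁} + k^{a₂} l^{b₂} ≤ c k^{a₁} l^{b₁}`
for every `l ∈ ℕ*` and `k = ⌊l^{h₁}⌋`. -/
theorem three_term_comparison_middle (a₀ a₁ a₂ b₀ b₁ b₂ : ℝ)
    (ha2 : 0 ≤ a₂) (ha21 : a₂ < a₁) (ha10 : a₁ < a₀)
    (hb0 : 0 ≤ b₀) (hb01 : b₀ < b₁) (hb12 : b₁ < b₂)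
    (hh : (b₂ - b₁) / (a₁ - a₂) < (b₁ - b₀) / (a₀ - a₁)) :
    ∃ c : ℝ, 0 < c ∧ ∀ l : ℕ, 1 ≤ l → ∀ k : ℕ,
      k = Nat.floor ((l : ℝ) ^ ((b₂ - b₁) / (a₁ - a₂))) →
      (k : ℝ) ^ a₀ * (l : ℝ) ^ b₀ + (k : ℝ) ^ a₁ * (l : ℝ) ^ b₁ +
          (k : ℝ) ^ a₂ * (l : ℝ) ^ b₂ ≤
        c * ((k : ℝ) ^ a₁ * (l : ℝ) ^ b₁) := by
  set h₁ := (b₂ - b₁) / (a₁ - a₂) with hh1def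
  have ha12 : (0:ℝ) < a₁ - a₂ := by linarith
  have ha01 : (0:ℝ) < a₀ - a₁ := by linarith
  have hh1pos : 0 < h₁ := div_pos (by linarith) ha12
  refine ⟨2 + 2 ^ (a₁ - a₂), by positivity, ?_⟩
  intro l hl k hk
  have hl1 : (1:ℝ) ≤ (l:ℝ) := by exact_mod_cast hl
  have hlp : (0:ℝ) < (l:ℝ) := by linarith
  have hx1 : (1:ℝ) ≤ (l:ℝ) ^ h₁ := Real.one_le_rpow hl1 hh1pos.le
  have hk1 : 1 ≤ k := by
    rw [hk]; exact Nat.le_floor (by exact_mod_cast hx1)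
  have hk1' : (1:ℝ) ≤ (k:ℝ) := by exact_mod_cast hk1
  have hkpos : (0:ℝ) < (k:ℝ) := by linarith
  have hkle : (k:ℝ) ≤ (l:ℝ) ^ h₁ := by
    rw [hk]; exact Nat.floor_le (by positivity)
  have hkge : (l:ℝ) ^ h₁ ≤ 2 * (k:ℝ) := by
    have h := Nat.lt_floor_add_one ((l:ℝ) ^ h₁)
    rw [← hk] at h
    linarith
  -- first term ≤ middle term
  have t0 : (k:ℝ) ^ a₀ * (l:ℝ) ^ b₀ ≤ (k:ℝ) ^ a₁ * (l:ℝ) ^ b₁ := by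
    have h1 : (k:ℝ) ^ a₀ = (k:ℝ) ^ a₁ * (k:ℝ) ^ (a₀ - a₁) := by
      rw [← Real.rpow_add hkpos]; ring_nf
    have h2 : (k:ℝ) ^ (a₀ - a₁) ≤ ((l:ℝ) ^ h₁) ^ (a₀ - a₁) :=
      Real.rpow_le_rpow hkpos.le hkle ha01.le
    have h3 : ((l:ℝ) ^ h₁) ^ (a₀ - a₁) = (l:ℝ) ^ (h₁ * (a₀ - a₁)) := by
      rw [← Real.rpow_mul hlp.le]
    have hexp : h₁ * (a₀ - a₁) ≤ b₁ - b₀ :=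
      le_of_lt ((lt_div_iff₀ ha01).mp hh)
    have h4 : (l:ℝ) ^ (h₁ * (a₀ - a₁)) ≤ (l:ℝ) ^ (b₁ - b₀) :=
      Real.rpow_le_rpow_of_exponent_le hl1 hexp
    have h5 : (k:ℝ) ^ (a₀ - a₁) * (l:ℝ) ^ b₀ ≤ (l:ℝ) ^ (b₁ - b₀) * (l:ℝ) ^ b₀ := by
      apply mul_le_mul_of_nonneg_right _ (by positivity)
      calc (k:ℝ) ^ (a₀ - a₁) ≤ ((l:ℝ) ^ h₁) ^ (a₀ - a₁) := h2
        _ = (l:ℝ) ^ (h₁ * (a₀ - a₁)) := h3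
        _ ≤ (l:ℝ) ^ (b₁ - b₀) := h4
    have h6 : (l:ℝ) ^ (b₁ - b₀) * (l:ℝ) ^ b₀ = (l:ℝ) ^ b₁ := by
      rw [← Real.rpow_add hlp]; ring_nf
    calc (k:ℝ) ^ a₀ * (l:ℝ) ^ b₀
        = (k:ℝ) ^ a₁ * ((k:ℝ) ^ (a₀ - a₁) * (l:ℝ) ^ b₀) := by rw [h1]; ring
      _ ≤ (k:ℝ) ^ a₁ * ((l:ℝ) ^ (b₁ - b₀) * (l:ℝ) ^ b₀) := by
          apply mul_le_mul_of_nonneg_left h5 (by positivity)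
      _ = (k:ℝ) ^ a₁ * (l:ℝ) ^ b₁ := by rw [h6]
  -- third term ≤ 2^(a₁-a₂) * middle term
  have t2 : (k:ℝ) ^ a₂ * (l:ℝ) ^ b₂ ≤ 2 ^ (a₁ - a₂) * ((k:ℝ) ^ a₁ * (l:ℝ) ^ b₁) := by
    have h1 : (l:ℝ) ^ b₂ = (l:ℝ) ^ b₁ * (l:ℝ) ^ (b₂ - b₁) := by
      rw [← Real.rpow_add hlp]; ring_nf
    have h2 : (l:ℝ) ^ (b₂ - b₁) = ((l:ℝ) ^ h₁) ^ (a₁ - a₂) := by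
      rw [← Real.rpow_mul hlp.le, hh1def, div_mul_cancel₀ _ (ne_of_gt ha12)]
    have h3 : ((l:ℝ) ^ h₁) ^ (a₁ - a₂) ≤ (2 * (k:ℝ)) ^ (a₁ - a₂) :=
      Real.rpow_le_rpow (by positivity) hkge ha12.le
    have h4 : (2 * (k:ℝ)) ^ (a₁ - a₂) = 2 ^ (a₁ - a₂) * (k:ℝ) ^ (a₁ - a₂) :=
      Real.mul_rpow (by norm_num) hkpos.le
    have h5 : (k:ℝ) ^ a₂ * (k:ℝ) ^ (a₁ - a₂) = (k:ℝ) ^ a₁ := by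
      rw [← Real.rpow_add hkpos]; ring_nf
    calc (k:ℝ) ^ a₂ * (l:ℝ) ^ b₂
        = (k:ℝ) ^ a₂ * (l:ℝ) ^ b₁ * ((l:ℝ) ^ h₁) ^ (a₁ - a₂) := by rw [h1, h2]; ring
      _ ≤ (k:ℝ) ^ a₂ * (l:ℝ) ^ b₁ * (2 ^ (a₁ - a₂) * (k:ℝ) ^ (a₁ - a₂)) := by
          rw [← h4]; apply mul_le_mul_of_nonneg_left h3 (by positivity)
      _ = 2 ^ (a₁ - a₂) * (((k:ℝ) ^ a₂ * (k:ℝ) ^ (a₁ - a₂)) * (l:ℝ) ^ b₁) := by ring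
      _ = 2 ^ (a₁ - a₂) * ((k:ℝ) ^ a₁ * (l:ℝ) ^ b₁) := by rw [h5]
  nlinarith [t0, t2, mul_pos (Real.rpow_pos_of_pos hkpos a₁) (Real.rpow_pos_of_pos hlp b₁)]
end

section
/- (i) For any reals a > 0, b > 0, c > 0, d > 0 and 0 ≤ δ < 1, the quotient (l!)^a / (⌊c l^δ + d⌋!)^b tends to ∞ as l → ∞ along ℕ*. (ii) For any reals a > b ≥ 0, c > 0 and 0 ≤ δ < 1, the quotient (l!)^a / (⌊c l^δ + l⌋!)^b tends to ∞ as l → ∞ along ℕ*. -/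
open Filter Real


/-- `m! ≤ l! * m^(m-l)` for `l ≤ m`. -/
lemma fact_le_fact_mul_pow {l m : ℕ} (h : l ≤ m) :
    m.factorial ≤ l.factorial * m ^ (m - l) := by
  obtain ⟨k, rfl⟩ := Nat.exists_eq_add_of_le h
  induction k with
  | zero => simp
  | succ k ih =>
    have h1 : (l + (k+1)).factorial = (l + k + 1) * (l + k).factorial := by
      rw [← Nat.add_assoc, Nat.factorial_succ]
    rw [h1]
    calc (l + k + 1) * (l + k).factorial
        ≤ (l + k + 1) * (l.factorial * (l + k) ^ (l + k - l)) :=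
          Nat.mul_le_mul_left _ (ih (Nat.le_add_right _ _))
      _ ≤ l.factorial * (l + (k+1)) ^ (l + (k+1) - l) := by
          have h2 : l + k - l = k := by omega
          have h3 : l + (k+1) - l = k + 1 := by omega
          rw [h2, h3, pow_succ]
          have h4 : (l + k) ^ k ≤ (l + (k+1)) ^ k :=
            Nat.pow_le_pow_left (by omega) k
          calc (l + k + 1) * (l.factorial * (l + k) ^ k)
              ≤ (l + (k+1)) * (l.factorial * (l + (k+1)) ^ k) := by
                exact Nat.mul_le_mul (by omega) (Nat.mul_le_mul_left _ h4)
            _ = l.factorial * ((l + (k+1)) ^ k * (l + (k+1))) := by ring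

/-- lower bound on log factorial -/
lemma log_factorial_lb {n : ℕ} (hn : 2 ≤ n) :
    (n : ℝ) / 2 * Real.log ((n : ℝ) / 2) ≤ Real.log (n.factorial) := by
  set k := n / 2 with hk
  have h1 : k.factorial * (k + 1) ^ (n - k) ≤ n.factorial := by
    have := @Nat.factorial_mul_pow_le_factorial k (n - k)
    have hkn : k + (n - k) = n := by omega
    rwa [hkn] at this
  have h2 : ((k + 1 : ℕ) : ℝ) ^ (n - k) ≤ (n.factorial : ℝ) := by
    have : (k+1) ^ (n - k) ≤ n.factorial :=
      le_trans (Nat.le_mul_of_pos_left _ k.factorial_pos) h1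
    exact_mod_cast this
  have hpow_pos : (0:ℝ) < ((k + 1 : ℕ) : ℝ) ^ (n - k) := by positivity
  have h3 : Real.log (((k + 1 : ℕ) : ℝ) ^ (n - k)) ≤ Real.log (n.factorial) :=
    Real.log_le_log hpow_pos h2
  rw [Real.log_pow] at h3
  refine le_trans ?_ h3
  have hhalf : (n : ℝ) / 2 ≤ ((k + 1 : ℕ) : ℝ) := by
    have h5 : n ≤ 2 * (k + 1) := by omega
    have h6 : (n:ℝ) ≤ 2 * ((k:ℝ) + 1) := by exact_mod_cast h5
    push_cast
    linarith
  have hcnt : (n : ℝ) / 2 ≤ ((n - k : ℕ) : ℝ) := by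
    have h5 : 2 * k ≤ n := by omega
    have h6 : (2:ℝ) * (k:ℝ) ≤ (n:ℝ) := by exact_mod_cast h5
    rw [Nat.cast_sub (by omega : k ≤ n)]
    linarith
  have hlog1 : (0:ℝ) ≤ Real.log ((n : ℝ) / 2) := by
    apply Real.log_nonneg
    have h5 : (2:ℝ) ≤ n := by exact_mod_cast hn
    linarith
  have hlog2 : Real.log ((n : ℝ) / 2) ≤ Real.log ((k + 1 : ℕ) : ℝ) :=
    Real.log_le_log (by positivity) hhalf
  calc (n : ℝ) / 2 * Real.log ((n : ℝ) / 2)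
      ≤ ((n - k : ℕ) : ℝ) * Real.log (((k + 1 : ℕ)) : ℝ) := by
        apply mul_le_mul hcnt hlog2 hlog1 (by positivity)
    _ = _ := rfl

/-- upper bound on log factorial -/
lemma log_factorial_ub (n : ℕ) :
    Real.log (n.factorial) ≤ (n : ℝ) * Real.log ((n : ℝ) + 1) := by
  have h1 : (n.factorial : ℝ) ≤ ((n : ℝ) + 1) ^ n := by
    have : n.factorial ≤ (n+1) ^ n :=
      le_trans n.factorial_le_pow (Nat.pow_le_pow_left (Nat.le_succ n) n)
    exact_mod_cast this
  have := Real.log_le_log (by exact_mod_cast n.factorial_pos) h1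
  rwa [Real.log_pow] at this

/-- key limit: `A x log x` beats `x^q log x`, `x^q`, and `x` for `A>0, q<1`. -/
lemma keyR (A B C D q : ℝ) (hA : 0 < A) (hq : q < 1) :
    Tendsto (fun x : ℝ => A * (x * Real.log x) - B * (x ^ q * Real.log x)
      - C * x ^ q - D * x) atTop atTop := by
  have hxlog : Tendsto (fun x : ℝ => x * Real.log x) atTop atTop :=
    Filter.Tendsto.atTop_mul_atTop₀ tendsto_id Real.tendsto_log_atTop
  have hpow0 : Tendsto (fun x : ℝ => x ^ (q - 1)) atTop (nhds 0) := by
    have := tendsto_rpow_neg_atTop (y := 1 - q) (by linarith)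
    simpa [neg_sub] using this
  have hloginv : Tendsto (fun x : ℝ => (Real.log x)⁻¹) atTop (nhds 0) :=
    Real.tendsto_log_atTop.inv_tendsto_atTop
  have hbr : Tendsto (fun x : ℝ =>
      A - B * x ^ (q - 1) - C * (x ^ (q - 1) * (Real.log x)⁻¹) - D * (Real.log x)⁻¹)
      atTop (nhds A) := by
    have h1 : Tendsto (fun x : ℝ => B * x ^ (q-1)) atTop (nhds 0) := by
      simpa using hpow0.const_mul B
    have h2 : Tendsto (fun x : ℝ => C * (x ^ (q-1) * (Real.log x)⁻¹)) atTop (nhds 0) := by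
      simpa using (hpow0.mul hloginv).const_mul C
    have h3 : Tendsto (fun x : ℝ => D * (Real.log x)⁻¹) atTop (nhds 0) := by
      simpa using hloginv.const_mul D
    have := ((tendsto_const_nhds (x := A) (f := atTop)).sub h1).sub h2 |>.sub h3
    simpa using this
  have hmain := Filter.Tendsto.atTop_mul_pos hA hxlog hbr
  refine hmain.congr' ?_
  filter_upwards [eventually_ge_atTop (2:ℝ)] with x hx
  have hx0 : (0:ℝ) < x := by linarith
  have hlogpos : 0 < Real.log x := Real.log_pos (by linarith)
  have hxq : x ^ q = x * x ^ (q - 1) := by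
    nth_rewrite 2 [← Real.rpow_one x]
    rw [← Real.rpow_add hx0]
    ring_nf
  field_simp [hxq]
  rw [hxq]; ring

/-- **Lemma 5.5** (Lastra–Tahara).
(i) For reals `a,b,c,d > 0` and `0 ≤ δ < 1`, `l!^a/(⌊c l^δ + d⌋!)^b → ∞` as `l → ∞`;
(ii) for reals `a > b ≥ 0`, `c > 0` and `0 ≤ δ < 1`, `l!^a/(⌊c l^δ + l⌋!)^b → ∞`
as `l → ∞`. -/
theorem factorial_quotient_tendsto_atTop :
    (∀ a b c d δ : ℝ, 0 < a → 0 < b → 0 < c → 0 < d → 0 ≤ δ → δ < 1 →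
      Filter.Tendsto
        (fun l : ℕ => ((l.factorial : ℝ)) ^ a /
          (((Nat.floor (c * (l : ℝ) ^ δ + d)).factorial : ℝ)) ^ b)
        Filter.atTop Filter.atTop) ∧
    (∀ a b c δ : ℝ, 0 ≤ b → b < a → 0 < c → 0 ≤ δ → δ < 1 →
      Filter.Tendsto
        (fun l : ℕ => ((l.factorial : ℝ)) ^ a /
          (((Nat.floor (c * (l : ℝ) ^ δ + (l : ℝ))).factorial : ℝ)) ^ b)
        Filter.atTop Filter.atTop) := by
  constructor
  · intro a b c d δ ha hb hc hd hδ0 hδ1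
    set E := c + d with hE
    have hE0 : 0 < E := by linarith
    set m : ℕ → ℕ := fun l => Nat.floor (c * (l : ℝ) ^ δ + d) with hm
    have hg : Tendsto (fun l : ℕ => a * Real.log (l.factorial)
        - b * Real.log ((m l).factorial)) atTop atTop := by
      apply tendsto_atTop_mono' atTop (f₁ := fun l : ℕ =>
        a / 2 * ((l : ℝ) * Real.log l) - (b * E) * ((l : ℝ) ^ δ * Real.log l)
          - (b * E * Real.log (E + 1)) * (l : ℝ) ^ δ - (a * Real.log 2 / 2) * l)
      · filter_upwards [eventually_ge_atTop 2] with l hl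
        have hl2 : (2 : ℝ) ≤ (l : ℝ) := by exact_mod_cast hl
        have hl1 : (1 : ℝ) ≤ (l : ℝ) := by linarith
        have hl0 : (0 : ℝ) < (l : ℝ) := by linarith
        have hrp1 : (1 : ℝ) ≤ (l : ℝ) ^ δ := Real.one_le_rpow hl1 hδ0
        have hrp0 : (0 : ℝ) < (l : ℝ) ^ δ := by linarith
        have hlogl : (0 : ℝ) ≤ Real.log l := Real.log_nonneg hl1
        -- lower bound on numerator log
        have hlowL : a * ((l : ℝ) / 2 * (Real.log l - Real.log 2)) ≤
            a * Real.log (l.factorial) := by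
          apply mul_le_mul_of_nonneg_left _ ha.le
          have := log_factorial_lb hl
          rwa [Real.log_div (by positivity) (by norm_num)] at this
        -- upper bound on denominator log
        have hmle : ((m l : ℕ) : ℝ) ≤ E * (l : ℝ) ^ δ := by
          have h1 : ((m l : ℕ) : ℝ) ≤ c * (l : ℝ) ^ δ + d :=
            Nat.floor_le (by positivity)
          have h2 : d ≤ d * (l : ℝ) ^ δ := by nlinarith
          rw [hE]; nlinarith
        have hlogm1 : Real.log (((m l : ℕ) : ℝ) + 1) ≤
            Real.log (E + 1) + Real.log l := by
          have h1 : ((m l : ℕ) : ℝ) + 1 ≤ (E + 1) * (l : ℝ) ^ δ := by nlinarith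
          have h2 := Real.log_le_log (by positivity) h1
          rw [Real.log_mul (by positivity) (by positivity), Real.log_rpow hl0] at h2
          nlinarith [Real.log_nonneg (by linarith : (1:ℝ) ≤ E + 1)]
        have hupM : Real.log ((m l).factorial) ≤
            E * (l : ℝ) ^ δ * (Real.log (E + 1) + Real.log l) := by
          refine le_trans (log_factorial_ub (m l)) ?_
          apply mul_le_mul hmle hlogm1
          · apply Real.log_nonneg; linarith [Nat.cast_nonneg (α := ℝ) (m l)]
          · positivity
        have hupMb : b * Real.log ((m l).factorial) ≤
            b * (E * (l : ℝ) ^ δ * (Real.log (E + 1) + Real.log l)) :=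
          mul_le_mul_of_nonneg_left hupM hb.le
        calc a / 2 * ((l : ℝ) * Real.log l) - (b * E) * ((l : ℝ) ^ δ * Real.log l)
              - (b * E * Real.log (E + 1)) * (l : ℝ) ^ δ - (a * Real.log 2 / 2) * l
            = a * ((l : ℝ) / 2 * (Real.log l - Real.log 2))
              - b * (E * (l : ℝ) ^ δ * (Real.log (E + 1) + Real.log l)) := by ring
          _ ≤ a * Real.log (l.factorial) - b * Real.log ((m l).factorial) := by
              exact sub_le_sub hlowL hupMb
      · exact (keyR (a / 2) (b * E) (b * E * Real.log (E + 1)) (a * Real.log 2 / 2)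
          δ (by linarith) hδ1).comp tendsto_natCast_atTop_atTop
    refine (Real.tendsto_exp_atTop.comp hg).congr fun l => ?_
    have h1 : (0 : ℝ) < (l.factorial : ℝ) := by exact_mod_cast l.factorial_pos
    have h2 : (0 : ℝ) < ((m l).factorial : ℝ) := by exact_mod_cast (m l).factorial_pos
    simp only [Function.comp_apply]
    rw [Real.rpow_def_of_pos h1, Real.rpow_def_of_pos h2, ← Real.exp_sub]
    congr 1
    ring
  · intro a b c δ hb hba hc hδ0 hδ1
    set m : ℕ → ℕ := fun l => Nat.floor (c * (l : ℝ) ^ δ + (l : ℝ)) with hm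
    have hg : Tendsto (fun l : ℕ => a * Real.log (l.factorial)
        - b * Real.log ((m l).factorial)) atTop atTop := by
      apply tendsto_atTop_mono' atTop (f₁ := fun l : ℕ =>
        (a - b) / 2 * ((l : ℝ) * Real.log l) - (b * c) * ((l : ℝ) ^ δ * Real.log l)
          - (b * c * Real.log (c + 1)) * (l : ℝ) ^ δ - ((a - b) * Real.log 2 / 2) * l)
      · filter_upwards [eventually_ge_atTop 2] with l hl
        have hl2 : (2 : ℝ) ≤ (l : ℝ) := by exact_mod_cast hl
        have hl1 : (1 : ℝ) ≤ (l : ℝ) := by linarith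
        have hl0 : (0 : ℝ) < (l : ℝ) := by linarith
        have hrp1 : (1 : ℝ) ≤ (l : ℝ) ^ δ := Real.one_le_rpow hl1 hδ0
        have hrp0 : (0 : ℝ) < (l : ℝ) ^ δ := by linarith
        have hrpl : (l : ℝ) ^ δ ≤ (l : ℝ) := by
          calc (l : ℝ) ^ δ ≤ (l : ℝ) ^ (1 : ℝ) :=
                Real.rpow_le_rpow_of_exponent_le hl1 hδ1.le
            _ = (l : ℝ) := Real.rpow_one _
        have hlogl : (0 : ℝ) ≤ Real.log l := Real.log_nonneg hl1
        have hlm : l ≤ m l := by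
          apply Nat.le_floor
          have : (0:ℝ) ≤ c * (l : ℝ) ^ δ := by positivity
          linarith
        have hml : ((m l : ℕ) : ℝ) ≤ c * (l : ℝ) ^ δ + l :=
          Nat.floor_le (by positivity)
        have hm0 : (0 : ℝ) < ((m l : ℕ) : ℝ) := by
          have : (2:ℕ) ≤ m l := le_trans hl hlm
          exact_mod_cast lt_of_lt_of_le (by norm_num) this
        -- lower bound on numerator log
        have L := Real.log (l.factorial)
        have hlowL : (a - b) * ((l : ℝ) / 2 * (Real.log l - Real.log 2)) ≤
            (a - b) * Real.log (l.factorial) := by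
          apply mul_le_mul_of_nonneg_left _ (by linarith)
          have := log_factorial_lb hl
          rwa [Real.log_div (by positivity) (by norm_num)] at this
        -- denominator ratio bound
        have hMX : Real.log ((m l).factorial) ≤ Real.log (l.factorial)
            + ((m l - l : ℕ) : ℝ) * Real.log (m l) := by
          have h1 : ((m l).factorial : ℝ) ≤
              (l.factorial : ℝ) * ((m l : ℕ) : ℝ) ^ ((m l - l : ℕ)) := by
            exact_mod_cast fact_le_fact_mul_pow hlm
          have h2 := Real.log_le_log (by exact_mod_cast (m l).factorial_pos) h1
          rwa [Real.log_mul (by exact_mod_cast l.factorial_pos.ne')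
            (by positivity), Real.log_pow] at h2
        have hcount : ((m l - l : ℕ) : ℝ) ≤ c * (l : ℝ) ^ δ := by
          rw [Nat.cast_sub hlm]; linarith
        have hlogm : Real.log (m l) ≤ Real.log (c + 1) + Real.log l := by
          have h1 : ((m l : ℕ) : ℝ) ≤ (c + 1) * l := by nlinarith
          have h2 := Real.log_le_log hm0 h1
          rwa [Real.log_mul (by positivity) (by positivity)] at h2
        have hlogm0 : (0 : ℝ) ≤ Real.log (m l) := by
          apply Real.log_nonneg
          have : (2:ℕ) ≤ m l := le_trans hl hlm
          exact_mod_cast le_trans (by norm_num) this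
        have hprod : ((m l - l : ℕ) : ℝ) * Real.log (m l) ≤
            c * (l : ℝ) ^ δ * (Real.log (c + 1) + Real.log l) :=
          mul_le_mul hcount hlogm hlogm0 (by positivity)
        have hbM : b * Real.log ((m l).factorial) ≤
            b * (Real.log (l.factorial) + c * (l : ℝ) ^ δ * (Real.log (c + 1) + Real.log l)) :=
          mul_le_mul_of_nonneg_left (by linarith) hb
        have e1 : (a - b) * Real.log (l.factorial)
            = a * Real.log (l.factorial) - b * Real.log (l.factorial) := by ring
        have e2 : b * (Real.log (l.factorial)
              + c * (l : ℝ) ^ δ * (Real.log (c + 1) + Real.log l))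
            = b * Real.log (l.factorial)
              + b * (c * (l : ℝ) ^ δ * (Real.log (c + 1) + Real.log l)) := by ring
        calc (a - b) / 2 * ((l : ℝ) * Real.log l) - (b * c) * ((l : ℝ) ^ δ * Real.log l)
              - (b * c * Real.log (c + 1)) * (l : ℝ) ^ δ - ((a - b) * Real.log 2 / 2) * l
            = (a - b) * ((l : ℝ) / 2 * (Real.log l - Real.log 2))
              - b * (c * (l : ℝ) ^ δ * (Real.log (c + 1) + Real.log l)) := by ring
          _ ≤ a * Real.log (l.factorial) - b * Real.log ((m l).factorial) := by
              linarith
      · exact (keyR ((a - b) / 2) (b * c) (b * c * Real.log (c + 1))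
          ((a - b) * Real.log 2 / 2) δ (by linarith) hδ1).comp tendsto_natCast_atTop_atTop
    refine (Real.tendsto_exp_atTop.comp hg).congr fun l => ?_
    have h1 : (0 : ℝ) < (l.factorial : ℝ) := by exact_mod_cast l.factorial_pos
    have h2 : (0 : ℝ) < ((m l).factorial : ℝ) := by exact_mod_cast (m l).factorial_pos
    simp only [Function.comp_apply]
    rw [Real.rpow_def_of_pos h1, Real.rpow_def_of_pos h2, ← Real.exp_sub]
    congr 1
    ring
end
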